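/- arXiv:1904.09224 — 11 statements merged into one kernel-verified Lean document; each statement's English description precedes it below -/
import Mathlib

section
/- Let 0 ≤ p < q be integers. Then, as ℚ-linear endomorphisms of B, one has e_p ∘ e_q − e_q ∘ e_p = 2 · ∑_{a=p}^{q−1} f_{p+q−a} ∘ e_a. -/
/-!
`B = ℚ[w_1, w_2, …]` realized as `MvPolynomial ℕ ℚ`, where the `i`-th variable
`X i` is `w_{i+1}` (so every variable is some `w_n` with `n ≥ 1`).
`f n` is multiplication by `w n`, and `e p` is the unique ℚ-linear derivation
with the prescribed values on the variables.
-/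

open MvPolynomial Finset

noncomputable section

abbrev B : Type := MvPolynomial ℕ ℚ

/-- The variable `w_n` of `B` (meaningful for `n ≥ 1`). -/
def w (n : ℕ) : B := MvPolynomial.X (n - 1)

/-- The prescribed value of the derivation `e_p` on the variable `w_m`:
`e_p(w_m) = ∑_{k=p+1}^{m-1} w_k w_{p+m-k}` if `p < m`, and
`e_p(w_m) = -∑_{k=m}^{p} w_k w_{p+m-k}` if `p ≥ m`. -/
def eVal (p m : ℕ) : B :=
  if p < m then ∑ k ∈ Icc (p + 1) (m - 1), w k * w (p + m - k)
  else - ∑ k ∈ Icc m p, w k * w (p + m - k)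

/-- The derivation `e_p`, as a ℚ-linear endomorphism of `B`.
(The `i`-th variable of `B` is `w_{i+1}`.) -/
def e (p : ℕ) : B →ₗ[ℚ] B :=
  (MvPolynomial.mkDerivation ℚ (fun i : ℕ => eVal p (i + 1))).toLinearMap

/-- Multiplication by `w_n`, as a ℚ-linear endomorphism of `B` (for `n ≥ 1`). -/
def f (n : ℕ) : B →ₗ[ℚ] B := LinearMap.mulLeft ℚ (w n)

namespace CoHA

def Hs (x : ℤ) : ℤ := if 0 ≤ x then 1 else 0

def chi (a b k : ℤ) : ℤ := Hs (b - k) - Hs (a - k)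

def wz (n : ℤ) : B := if 1 ≤ n then w n.toNat else 0

lemma Hs_pair (x y : ℤ) (h : x + y = -1) : Hs y = 1 - Hs x := by
  unfold Hs; split_ifs <;> omega

lemma wz_natCast (n : ℕ) (hn : 1 ≤ n) : wz (n : ℤ) = w n := by
  simp [wz, hn, show (1:ℤ) ≤ (n:ℤ) by exact_mod_cast hn]

lemma wz_nonpos {n : ℤ} (hn : n ≤ 0) : wz n = 0 := by
  simp only [wz, if_neg (by omega : ¬ (1:ℤ) ≤ n)]

lemma chi_eq_zero {a b k : ℤ} (h : (k ≤ a ∧ k ≤ b) ∨ (a < k ∧ b < k)) : chi a b k = 0 := by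
  unfold chi Hs; split_ifs <;> omega

lemma chi_support {a b k : ℤ} (h : chi a b k ≠ 0) : min a b < k ∧ k ≤ max a b := by
  unfold chi Hs at h; split_ifs at h <;> omega

lemma chi_eq_one {a b k : ℤ} (h1 : a < k) (h2 : k ≤ b) : chi a b k = 1 := by
  unfold chi Hs; split_ifs <;> omega

lemma chi_eq_negone {a b k : ℤ} (h1 : b < k) (h2 : k ≤ a) : chi a b k = -1 := by
  unfold chi Hs; split_ifs <;> omega

lemma sum_smul_congr {D : Finset ℤ} {c : ℤ → ℤ} {F G : ℤ → B}
    (h : ∀ k ∈ D, c k ≠ 0 → F k = G k) :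
    ∑ k ∈ D, c k • F k = ∑ k ∈ D, c k • G k :=
  Finset.sum_congr rfl fun k hk => by
    by_cases hc : c k = 0
    · rw [hc]; simp
    · rw [h k hk hc]

lemma sum_chi_ext {a b : ℤ} {D D' : Finset ℤ} (hDD : D ⊆ D')
    (hsupp : ∀ k, min a b < k → k ≤ max a b → k ∈ D) (F : ℤ → B) :
    ∑ k ∈ D, chi a b k • F k = ∑ k ∈ D', chi a b k • F k := by
  apply Finset.sum_subset hDD
  intro k _ hk2
  have : chi a b k = 0 := by
    by_contra h
    exact hk2 (hsupp k (chi_support h).1 (chi_support h).2)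
  rw [this]; simp

lemma natInt_sum (a b : ℕ) (g : ℤ → B) :
    ∑ k ∈ Finset.Icc (a:ℤ) (b:ℤ), g k = ∑ k ∈ Finset.Icc a b, g (k:ℤ) := by
  refine Finset.sum_nbij' (fun k : ℤ => k.toNat) (fun k : ℕ => (k:ℤ)) ?_ ?_ ?_ ?_ ?_
  · intro k hk; simp only [Finset.mem_Icc] at *; omega
  · intro k hk; simp only [Finset.mem_Icc] at *; omega
  · intro k hk; simp only [Finset.mem_Icc] at *; omega
  · intro k hk; simp only [Finset.mem_Icc] at *; omega
  · intro k hk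
    simp only [Finset.mem_Icc] at hk
    exact congrArg g (by show k = ((k.toNat : ℕ) : ℤ); omega)

/-- Write an interval sum as a `chi`-weighted sum over a bigger domain. -/
lemma sum_Icc_chi {a0 b0 : ℤ} (h : a0 - 1 ≤ b0) {D : Finset ℤ}
    (hD : Finset.Icc a0 b0 ⊆ D) (G : ℤ → B) :
    ∑ α ∈ Finset.Icc a0 b0, G α = ∑ α ∈ D, chi (a0-1) b0 α • G α := by
  have h1 : ∑ α ∈ Finset.Icc a0 b0, G α = ∑ α ∈ Finset.Icc a0 b0, chi (a0-1) b0 α • G α := by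
    apply Finset.sum_congr rfl
    intro k hk
    rw [Finset.mem_Icc] at hk
    rw [chi_eq_one (by omega) (by omega), one_smul]
  rw [h1]
  apply Finset.sum_subset hD
  intro k _ hk2
  rw [Finset.mem_Icc] at hk2
  rw [chi_eq_zero (by omega), zero_smul]

def eValz (a n : ℤ) : B :=
  ∑ k ∈ Finset.Icc 1 (a + n - 1), chi a (n-1) k • (wz k * wz (a + n - k))

lemma eVal_eq (p m : ℕ) (hm : 1 ≤ m) : eVal p m = eValz (p:ℤ) (m:ℤ) := by
  have hm' : (1:ℤ) ≤ (m:ℤ) := by exact_mod_cast hm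
  rw [eVal, eValz]
  split_ifs with hpm
  · have hpm' : (p:ℤ) < (m:ℤ) := by exact_mod_cast hpm
    rw [← sum_chi_ext (a := (p:ℤ)) (b := (m:ℤ)-1)
        (D := Finset.Icc ((p:ℤ)+1) ((m:ℤ)-1)) (D' := Finset.Icc 1 ((p:ℤ)+(m:ℤ)-1))
        (by intro k hk; simp only [Finset.mem_Icc] at *; omega)
        (by intro k h1 h2; simp only [Finset.mem_Icc]; omega)]
    rw [show ((p:ℤ)+1) = ((p+1 : ℕ) : ℤ) by omega,
        show ((m:ℤ)-1) = ((m-1 : ℕ) : ℤ) by omega,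
        natInt_sum]
    apply Finset.sum_congr rfl
    intro k hk
    simp only [Finset.mem_Icc] at hk
    rw [chi_eq_one (by omega) (by omega), one_smul,
        wz_natCast k (by omega),
        show ((p:ℤ) + (m:ℤ) - (k:ℤ)) = ((p + m - k : ℕ) : ℤ) by omega,
        wz_natCast _ (by omega)]
  · have hpm' : (m:ℤ) ≤ (p:ℤ) := by exact_mod_cast Nat.le_of_not_lt hpm
    rw [← sum_chi_ext (a := (p:ℤ)) (b := (m:ℤ)-1)
        (D := Finset.Icc ((m:ℤ)) ((p:ℤ))) (D' := Finset.Icc 1 ((p:ℤ)+(m:ℤ)-1))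
        (by intro k hk; simp only [Finset.mem_Icc] at *; omega)
        (by intro k h1 h2; simp only [Finset.mem_Icc]; omega)]
    rw [show ((m:ℤ)) = ((m : ℕ) : ℤ) by norm_cast, show ((p:ℤ)) = ((p : ℕ) : ℤ) by norm_cast,
        natInt_sum, ← Finset.sum_neg_distrib]
    apply Finset.sum_congr rfl
    intro k hk
    simp only [Finset.mem_Icc] at hk
    rw [chi_eq_negone (by omega) (by omega), neg_one_zsmul,
        wz_natCast k (by omega),
        show ((p:ℤ) + (m:ℤ) - (k:ℤ)) = ((p + m - k : ℕ) : ℤ) by omega,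
        wz_natCast _ (by omega)]

def E (p : ℕ) : Derivation ℚ B B := MvPolynomial.mkDerivation ℚ (fun i : ℕ => eVal p (i + 1))

lemma e_eq (p : ℕ) : e p = (E p).toLinearMap := rfl

lemma E_w (p n : ℕ) (hn : 1 ≤ n) : E p (w n) = eVal p n := by
  rw [w, E, MvPolynomial.mkDerivation_X]
  congr 1
  omega

lemma E_wz (p : ℕ) {n : ℤ} (hn : 1 ≤ n) : E p (wz n) = eValz (p:ℤ) n := by
  have h1 : wz n = w n.toNat := by
    rw [← wz_natCast n.toNat (by omega), Int.toNat_of_nonneg (by omega)]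
  rw [h1, E_w p n.toNat (by omega), eVal_eq p n.toNat (by omega),
      Int.toNat_of_nonneg (by omega)]

lemma D_zsmul (D : Derivation ℚ B B) (c : ℤ) (x : B) : D (c • x) = c • D x := by
  rw [← Int.cast_smul_eq_zsmul ℚ, Derivation.map_smul, Int.cast_smul_eq_zsmul]


def mono (S : ℤ) (x : ℤ × ℤ) : B := wz x.1 * wz x.2 * wz (S - x.1 - x.2)

lemma mono_supp {S : ℤ} {x : ℤ × ℤ} (h : x ∉ Finset.Icc 1 S ×ˢ Finset.Icc 1 S) :
    mono S x = 0 := by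
  simp only [Finset.mem_product, Finset.mem_Icc] at h
  by_cases h1 : x.1 ≤ 0
  · rw [mono, wz_nonpos h1, zero_mul, zero_mul]
  by_cases h2 : x.2 ≤ 0
  · rw [mono, wz_nonpos h2, mul_zero, zero_mul]
  · rw [mono, wz_nonpos (show S - x.1 - x.2 ≤ 0 by omega), mul_zero]

lemma Phi_supp (S : ℤ) (c : ℤ → ℤ → ℤ) :
    (Function.support fun x : ℤ × ℤ => c x.1 x.2 • mono S x) ⊆
      ↑(Finset.Icc 1 S ×ˢ Finset.Icc 1 S) := by
  intro x hx
  by_contra hmem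
  apply hx
  show c x.1 x.2 • mono S x = 0
  rw [mono_supp (fun hc => hmem (Finset.mem_coe.mpr hc)), smul_zero]

lemma Phi_fin (S : ℤ) (c : ℤ → ℤ → ℤ) :
    (Function.support fun x : ℤ × ℤ => c x.1 x.2 • mono S x).Finite :=
  Set.Finite.subset (Finset.finite_toSet _) (Phi_supp S c)

def Phi (S : ℤ) (c : ℤ → ℤ → ℤ) : B := ∑ᶠ x : ℤ × ℤ, c x.1 x.2 • mono S x

lemma Phi_add (S : ℤ) (c1 c2 : ℤ → ℤ → ℤ) :
    Phi S c1 + Phi S c2 = Phi S (fun u v => c1 u v + c2 u v) := by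
  rw [Phi, Phi, Phi, ← finsum_add_distrib (Phi_fin S c1) (Phi_fin S c2)]
  exact finsum_congr fun x => (add_smul _ _ _).symm

lemma Phi_sub (S : ℤ) (c1 c2 : ℤ → ℤ → ℤ) :
    Phi S c1 - Phi S c2 = Phi S (fun u v => c1 u v - c2 u v) := by
  rw [Phi, Phi, Phi, ← finsum_sub_distrib (Phi_fin S c1) (Phi_fin S c2)]
  exact finsum_congr fun x => (sub_smul _ _ _).symm

lemma Phi_zero (S : ℤ) : Phi S (fun _ _ => (0:ℤ)) = 0 := by
  simp [Phi]

lemma mono_swap (S : ℤ) (x : ℤ × ℤ) : mono S (x.2, x.1) = mono S x := by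
  simp only [mono]
  rw [show S - x.2 - x.1 = S - x.1 - x.2 by ring]
  ring

lemma Phi_swap (S : ℤ) (c : ℤ → ℤ → ℤ) : Phi S c = Phi S (fun u v => c v u) := by
  rw [Phi, ← finsum_comp_equiv (Equiv.prodComm ℤ ℤ)
      (f := fun x : ℤ × ℤ => c x.1 x.2 • mono S x), Phi]
  exact finsum_congr fun x => congrArg _ (mono_swap S x)

def flipE (S : ℤ) : ℤ × ℤ ≃ ℤ × ℤ where
  toFun x := (x.1, S - x.1 - x.2)
  invFun x := (x.1, S - x.1 - x.2)
  left_inv x := Prod.ext rfl (by show S - x.1 - (S - x.1 - x.2) = x.2; ring)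
  right_inv x := Prod.ext rfl (by show S - x.1 - (S - x.1 - x.2) = x.2; ring)

lemma mono_flip (S : ℤ) (x : ℤ × ℤ) : mono S (x.1, S - x.1 - x.2) = mono S x := by
  simp only [mono]
  rw [show S - x.1 - (S - x.1 - x.2) = x.2 by ring]
  ring

lemma Phi_flip (S : ℤ) (c : ℤ → ℤ → ℤ) : Phi S c = Phi S (fun u v => c u (S - u - v)) := by
  rw [Phi, ← finsum_comp_equiv (flipE S)
      (f := fun x : ℤ × ℤ => c x.1 x.2 • mono S x), Phi]
  exact finsum_congr fun x => congrArg _ (mono_flip S x)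


def cA (P Q M : ℤ) (u v : ℤ) : ℤ := chi Q (M-1) (u+v-P) * chi P (u+v-P-1) u
def cB (P Q M : ℤ) (u v : ℤ) : ℤ := chi Q (M-1) u * chi P (Q+M-u-1) v
def cR (P Q M : ℤ) (u v : ℤ) : ℤ := chi (P-1) (Q-1) (P+Q-u) * chi (P+Q-u) (M-1) v

def shearE (P : ℤ) : ℤ × ℤ ≃ ℤ × ℤ where
  toFun x := (x.1 + x.2 - P, x.1)
  invFun x := (x.2, P + x.1 - x.2)
  left_inv x := Prod.ext (by show x.1 = x.1; rfl) (by show P + (x.1 + x.2 - P) - x.1 = x.2; ring)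
  right_inv x := Prod.ext (by show x.2 + (P + x.1 - x.2) - P = x.1; ring) (by show x.2 = x.2; rfl)

lemma expand (p : ℕ) {P Q M : ℤ} (hP : P = (p:ℤ)) (hQ : 0 ≤ Q) (hM : 1 ≤ M) :
    E p (eValz Q M) = Phi (P+Q+M) (cA P Q M) + Phi (P+Q+M) (cB P Q M) := by
  have hP0 : 0 ≤ P := by rw [hP]; exact_mod_cast Nat.zero_le p
  have Ew : ∀ n : ℤ, 1 ≤ n → E p (wz n) = eValz P n := fun n hn => by
    rw [hP]; exact E_wz p hn
  set KD := Finset.Icc (1:ℤ) (Q + M - 1) with hKD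
  set JJ := Finset.Icc (1:ℤ) (2*(P+Q+M)) with hJJ
  have step1 : E p (eValz Q M) =
      ∑ k ∈ KD, chi Q (M-1) k •
        (wz k * E p (wz (Q+M-k)) + wz (Q+M-k) * E p (wz k)) := by
    rw [eValz, map_sum]
    exact Finset.sum_congr rfl fun k _ => by
      rw [D_zsmul, Derivation.leibniz, smul_eq_mul, smul_eq_mul]
  have step2 : ∑ k ∈ KD, chi Q (M-1) k •
        (wz k * E p (wz (Q+M-k)) + wz (Q+M-k) * E p (wz k)) =
      ∑ k ∈ KD, chi Q (M-1) k •
        ((∑ j ∈ JJ, chi P (Q+M-k-1) j • (wz k * wz j * wz (P+Q+M-k-j)))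
       + (∑ j ∈ JJ, chi P (k-1) j • (wz j * wz (P+k-j) * wz (Q+M-k)))) := by
    apply sum_smul_congr
    intro k _ hne
    obtain ⟨hk1, hk2⟩ := chi_support hne
    have hk1' : 1 ≤ k := by omega
    have hk2' : k ≤ Q + M - 1 := by omega
    rw [Ew (Q+M-k) (by omega), Ew k hk1', eValz, eValz]
    congr 1
    · rw [sum_chi_ext (a := P) (b := Q+M-k-1)
          (D := Finset.Icc 1 (P + (Q+M-k) - 1)) (D' := JJ)
          (by intro j hj; simp only [hJJ, Finset.mem_Icc] at *; omega)
          (by intro j h1 h2; simp only [Finset.mem_Icc]; omega),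
        Finset.mul_sum]
      apply Finset.sum_congr rfl
      intro j _
      rw [mul_smul_comm, show P + (Q+M-k) - j = P+Q+M-k-j by ring, ← mul_assoc]
    · rw [sum_chi_ext (a := P) (b := k-1)
          (D := Finset.Icc 1 (P + k - 1)) (D' := JJ)
          (by intro j hj; simp only [hJJ, Finset.mem_Icc] at *; omega)
          (by intro j h1 h2; simp only [Finset.mem_Icc]; omega),
        Finset.mul_sum]
      apply Finset.sum_congr rfl
      intro j _
      rw [mul_smul_comm, mul_comm (wz (Q+M-k)) (wz j * wz (P+k-j))]
  have step3 : ∑ k ∈ KD, chi Q (M-1) k •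
        ((∑ j ∈ JJ, chi P (Q+M-k-1) j • (wz k * wz j * wz (P+Q+M-k-j)))
       + (∑ j ∈ JJ, chi P (k-1) j • (wz j * wz (P+k-j) * wz (Q+M-k)))) =
      (∑ x ∈ KD ×ˢ JJ, (chi Q (M-1) x.1 * chi P (Q+M-x.1-1) x.2) •
          (wz x.1 * wz x.2 * wz (P+Q+M-x.1-x.2)))
    + (∑ x ∈ KD ×ˢ JJ, (chi Q (M-1) x.1 * chi P (x.1-1) x.2) •
          (wz x.2 * wz (P+x.1-x.2) * wz (Q+M-x.1))) := by
    rw [Finset.sum_product, Finset.sum_product, ← Finset.sum_add_distrib]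
    apply Finset.sum_congr rfl
    intro k _
    rw [smul_add, Finset.smul_sum, Finset.smul_sum]
    congr 1 <;> exact Finset.sum_congr rfl fun j _ => by rw [smul_smul]
  have hsup2 : (Function.support fun x : ℤ × ℤ =>
      (chi Q (M-1) x.1 * chi P (Q+M-x.1-1) x.2) •
          (wz x.1 * wz x.2 * wz (P+Q+M-x.1-x.2))) ⊆ ↑(KD ×ˢ JJ) := by
    intro x hx
    simp only [Function.mem_support, ne_eq] at hx
    have h1 : chi Q (M-1) x.1 ≠ 0 := fun h => hx (by rw [h, zero_mul, zero_smul])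
    have h2 : chi P (Q+M-x.1-1) x.2 ≠ 0 := fun h => hx (by rw [h, mul_zero, zero_smul])
    have b1 := chi_support h1
    have b2 := chi_support h2
    simp only [Finset.coe_product, Set.mem_prod, Finset.mem_coe, hKD, hJJ, Finset.mem_Icc]
    omega
  have hsup1 : (Function.support fun x : ℤ × ℤ =>
      (chi Q (M-1) x.1 * chi P (x.1-1) x.2) •
          (wz x.2 * wz (P+x.1-x.2) * wz (Q+M-x.1))) ⊆ ↑(KD ×ˢ JJ) := by
    intro x hx
    simp only [Function.mem_support, ne_eq] at hx
    have h1 : chi Q (M-1) x.1 ≠ 0 := fun h => hx (by rw [h, zero_mul, zero_smul])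
    have h2 : chi P (x.1-1) x.2 ≠ 0 := fun h => hx (by rw [h, mul_zero, zero_smul])
    have b1 := chi_support h1
    have b2 := chi_support h2
    simp only [Finset.coe_product, Set.mem_prod, Finset.mem_coe, hKD, hJJ, Finset.mem_Icc]
    omega
  have hPhiB : Phi (P+Q+M) (cB P Q M) =
      ∑ x ∈ KD ×ˢ JJ, (chi Q (M-1) x.1 * chi P (Q+M-x.1-1) x.2) •
          (wz x.1 * wz x.2 * wz (P+Q+M-x.1-x.2)) := by
    rw [Phi]
    exact finsum_eq_sum_of_support_subset _ hsup2
  have hPhiA : Phi (P+Q+M) (cA P Q M) =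
      ∑ x ∈ KD ×ˢ JJ, (chi Q (M-1) x.1 * chi P (x.1-1) x.2) •
          (wz x.2 * wz (P+x.1-x.2) * wz (Q+M-x.1)) := by
    calc Phi (P+Q+M) (cA P Q M)
        = ∑ᶠ y : ℤ × ℤ, (fun x : ℤ × ℤ => (chi Q (M-1) x.1 * chi P (x.1-1) x.2) •
            (wz x.2 * wz (P+x.1-x.2) * wz (Q+M-x.1))) ((shearE P) y) := by
          rw [Phi]
          apply finsum_congr
          intro y
          show cA P Q M y.1 y.2 • mono (P+Q+M) y =
            (chi Q (M-1) (y.1+y.2-P) * chi P ((y.1+y.2-P)-1) y.1) •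
              (wz y.1 * wz (P+(y.1+y.2-P)-y.1) * wz (Q+M-(y.1+y.2-P)))
          rw [show P+(y.1+y.2-P)-y.1 = y.2 by ring,
              show Q+M-(y.1+y.2-P) = P+Q+M-y.1-y.2 by ring]
          rfl
      _ = ∑ᶠ x : ℤ × ℤ, (chi Q (M-1) x.1 * chi P (x.1-1) x.2) •
            (wz x.2 * wz (P+x.1-x.2) * wz (Q+M-x.1)) :=
          finsum_comp_equiv (shearE P) (f := fun x : ℤ × ℤ =>
            (chi Q (M-1) x.1 * chi P (x.1-1) x.2) •
              (wz x.2 * wz (P+x.1-x.2) * wz (Q+M-x.1)))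
      _ = ∑ x ∈ KD ×ˢ JJ, (chi Q (M-1) x.1 * chi P (x.1-1) x.2) •
            (wz x.2 * wz (P+x.1-x.2) * wz (Q+M-x.1)) :=
          finsum_eq_sum_of_support_subset _ hsup1
  rw [step1, step2, step3, hPhiA, hPhiB, add_comm]


def mulE (P Q : ℤ) : ℤ × ℤ ≃ ℤ × ℤ where
  toFun x := (P + Q - x.1, x.2)
  invFun x := (P + Q - x.1, x.2)
  left_inv x := Prod.ext (by show P + Q - (P + Q - x.1) = x.1; ring) (by show x.2 = x.2; rfl)
  right_inv x := Prod.ext (by show P + Q - (P + Q - x.1) = x.1; ring) (by show x.2 = x.2; rfl)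

lemma rhs_expand (p q m : ℕ) (hpq : p < q) (hm : 1 ≤ m) :
    ∑ a ∈ Finset.Icc p (q-1), w (p+q-a) * eVal a m =
      Phi ((p:ℤ)+(q:ℤ)+(m:ℤ)) (cR (p:ℤ) (q:ℤ) (m:ℤ)) := by
  have hq1 : (1:ℕ) ≤ q := by omega
  set P := (p:ℤ) with hPd
  set Q := (q:ℤ) with hQd
  set M := (m:ℤ) with hMd
  have hP0 : 0 ≤ P := by rw [hPd]; exact_mod_cast Nat.zero_le p
  have hPQ : P < Q := by rw [hPd, hQd]; exact_mod_cast hpq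
  have hM1 : 1 ≤ M := by rw [hMd]; exact_mod_cast hm
  set D0 := Finset.Icc (0:ℤ) (P+Q+M) with hD0
  set JJ := Finset.Icc (1:ℤ) (2*(P+Q+M)) with hJJ
  have step0 : ∑ a ∈ Finset.Icc p (q-1), w (p+q-a) * eVal a m =
      ∑ α ∈ Finset.Icc P (Q-1), wz (P+Q-α) * eValz α M := by
    rw [show Q - 1 = ((q-1:ℕ):ℤ) by omega, hPd, natInt_sum]
    apply Finset.sum_congr rfl
    intro a ha
    simp only [Finset.mem_Icc] at ha
    rw [show P+Q-(a:ℤ) = ((p+q-a : ℕ):ℤ) by omega, wz_natCast _ (by omega),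
        eVal_eq a m hm]
  rw [step0, sum_Icc_chi (show P - 1 ≤ Q - 1 by omega)
      (show Finset.Icc P (Q-1) ⊆ D0 by intro k hk; simp only [hD0, Finset.mem_Icc] at *; omega)]
  have step2 : ∑ α ∈ D0, chi (P-1) (Q-1) α • (wz (P+Q-α) * eValz α M) =
      ∑ α ∈ D0, chi (P-1) (Q-1) α •
        ∑ j ∈ JJ, chi α (M-1) j • (wz (P+Q-α) * wz j * wz (α+M-j)) := by
    apply sum_smul_congr
    intro α hα hne
    obtain ⟨hα1, hα2⟩ := chi_support hne
    rw [eValz, sum_chi_ext (a := α) (b := M-1)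
        (D := Finset.Icc 1 (α + M - 1)) (D' := JJ)
        (by intro j hj; simp only [hJJ, Finset.mem_Icc] at *; omega)
        (by intro j h1 h2; simp only [Finset.mem_Icc]; omega),
      Finset.mul_sum]
    apply Finset.sum_congr rfl
    intro j _
    rw [mul_smul_comm, ← mul_assoc]
  rw [step2]
  have step3 : ∑ α ∈ D0, chi (P-1) (Q-1) α •
        ∑ j ∈ JJ, chi α (M-1) j • (wz (P+Q-α) * wz j * wz (α+M-j)) =
      ∑ x ∈ D0 ×ˢ JJ, (chi (P-1) (Q-1) x.1 * chi x.1 (M-1) x.2) •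
        (wz (P+Q-x.1) * wz x.2 * wz (x.1+M-x.2)) := by
    rw [Finset.sum_product]
    apply Finset.sum_congr rfl
    intro α _
    rw [Finset.smul_sum]
    exact Finset.sum_congr rfl fun j _ => by rw [smul_smul]
  rw [step3]
  have hsup : (Function.support fun x : ℤ × ℤ =>
      (chi (P-1) (Q-1) x.1 * chi x.1 (M-1) x.2) •
        (wz (P+Q-x.1) * wz x.2 * wz (x.1+M-x.2))) ⊆ ↑(D0 ×ˢ JJ) := by
    intro x hx
    simp only [Function.mem_support, ne_eq] at hx
    have h1 : chi (P-1) (Q-1) x.1 ≠ 0 := fun h => hx (by rw [h, zero_mul, zero_smul])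
    have h2 : chi x.1 (M-1) x.2 ≠ 0 := fun h => hx (by rw [h, mul_zero, zero_smul])
    have b1 := chi_support h1
    have b2 := chi_support h2
    simp only [Finset.coe_product, Set.mem_prod, Finset.mem_coe, hD0, hJJ, Finset.mem_Icc]
    omega
  refine Eq.symm ?_
  calc Phi (P+Q+M) (cR P Q M)
      = ∑ᶠ y : ℤ × ℤ, (fun x : ℤ × ℤ => (chi (P-1) (Q-1) x.1 * chi x.1 (M-1) x.2) •
          (wz (P+Q-x.1) * wz x.2 * wz (x.1+M-x.2))) ((mulE P Q) y) := by
        rw [Phi]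
        apply finsum_congr
        intro y
        show cR P Q M y.1 y.2 • mono (P+Q+M) y =
          (chi (P-1) (Q-1) (P+Q-y.1) * chi (P+Q-y.1) (M-1) y.2) •
            (wz (P+Q-(P+Q-y.1)) * wz y.2 * wz ((P+Q-y.1)+M-y.2))
        rw [show P+Q-(P+Q-y.1) = y.1 by ring,
            show (P+Q-y.1)+M-y.2 = P+Q+M-y.1-y.2 by ring]
        rfl
    _ = ∑ᶠ x : ℤ × ℤ, (chi (P-1) (Q-1) x.1 * chi x.1 (M-1) x.2) •
          (wz (P+Q-x.1) * wz x.2 * wz (x.1+M-x.2)) :=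
        finsum_comp_equiv (mulE P Q) (f := fun x : ℤ × ℤ =>
          (chi (P-1) (Q-1) x.1 * chi x.1 (M-1) x.2) •
            (wz (P+Q-x.1) * wz x.2 * wz (x.1+M-x.2)))
    _ = ∑ x ∈ D0 ×ˢ JJ, (chi (P-1) (Q-1) x.1 * chi x.1 (M-1) x.2) •
          (wz (P+Q-x.1) * wz x.2 * wz (x.1+M-x.2)) :=
        finsum_eq_sum_of_support_subset _ hsup

def Ctot (P Q M : ℤ) (u v : ℤ) : ℤ :=
  cA P Q M u v + cB P Q M u v - (cA Q P M u v + cB Q P M u v)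
    - (cR P Q M u v + cR P Q M u v)

lemma key (P Q M u v : ℤ) :
    Ctot P Q M u v + Ctot P Q M v u + Ctot P Q M u (P+Q+M-u-v)
      + Ctot P Q M (P+Q+M-u-v) u + Ctot P Q M v (P+Q+M-u-v)
      + Ctot P Q M (P+Q+M-u-v) v = 0 := by
  simp only [Ctot, cA, cB, cR, chi]
  ring_nf
  rw [Hs_pair (-1 + u - P) (-u + P) (by ring),
      Hs_pair (-1 + v - P) (-v + P) (by ring),
      Hs_pair (-1 + u - Q) (-u + Q) (by ring),
      Hs_pair (-1 + v - Q) (-v + Q) (by ring),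
      Hs_pair (-1 + M - u) (-M + u) (by ring),
      Hs_pair (-1 + M - v) (-M + v) (by ring),
      Hs_pair (-1 + u + v - P - Q) (-u - v + P + Q) (by ring),
      Hs_pair (-1 + M - u - v + Q) (-M + u + v - Q) (by ring),
      Hs_pair (-1 + M - u - v + P) (-M + u + v - P) (by ring)]
  ring


lemma Phi_Ctot_zero (P Q M : ℤ) : Phi (P+Q+M) (Ctot P Q M) = 0 := by
  set S := P+Q+M with hS
  set c := Ctot P Q M with hc
  have e2 : Phi S c = Phi S (fun u v => c v u) := Phi_swap S c
  have e3 : Phi S c = Phi S (fun u v => c u (S-u-v)) := Phi_flip S c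
  have e4 : Phi S c = Phi S (fun u v => c (S-u-v) u) :=
    e2.trans ((Phi_flip S (fun u v => c v u)).trans rfl)
  have e5 : Phi S c = Phi S (fun u v => c v (S-u-v)) := by
    refine e3.trans ((Phi_swap S (fun u v => c u (S-u-v))).trans ?_)
    exact congrArg (Phi S) (funext fun u => funext fun v => by
      show c v (S-v-u) = c v (S-u-v)
      congr 1
      ring)
  have e6 : Phi S c = Phi S (fun u v => c (S-u-v) v) := by
    refine e4.trans ((Phi_swap S (fun u v => c (S-u-v) u)).trans ?_)
    exact congrArg (Phi S) (funext fun u => funext fun v => by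
      show c (S-v-u) v = c (S-u-v) v
      congr 1
      ring)
  have hsum : Phi S c + Phi S c + Phi S c + Phi S c + Phi S c + Phi S c = 0 := by
    nth_rewrite 6 [e6]
    nth_rewrite 5 [e5]
    nth_rewrite 4 [e4]
    nth_rewrite 3 [e3]
    nth_rewrite 2 [e2]
    rw [Phi_add, Phi_add, Phi_add, Phi_add, Phi_add]
    rw [show (fun u v => ((((c u v + (fun u v => c v u) u v) + (fun u v => c u (S-u-v)) u v)
          + (fun u v => c (S-u-v) u) u v) + (fun u v => c v (S-u-v)) u v)
          + (fun u v => c (S-u-v) v) u v) = (fun _ _ => (0:ℤ)) from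
      funext fun u => funext fun v => by
        show c u v + c v u + c u (S-u-v) + c (S-u-v) u + c v (S-u-v) + c (S-u-v) v = 0
        rw [hc, hS]
        exact key P Q M u v]
    exact Phi_zero S
  have h6 : (6:ℚ) • Phi S c = 0 := by
    rw [show (6:ℚ) = 1+1+1+1+1+1 by norm_num, add_smul, add_smul, add_smul, add_smul,
        add_smul, one_smul]
    exact hsum
  calc Phi S c = ((6:ℚ)⁻¹ * 6) • Phi S c := by
        rw [show ((6:ℚ)⁻¹ * 6) = 1 by norm_num, one_smul]
    _ = (6:ℚ)⁻¹ • ((6:ℚ) • Phi S c) := mul_smul _ _ _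
    _ = (6:ℚ)⁻¹ • (0:B) := by rw [h6]
    _ = 0 := smul_zero _

lemma core (p q m : ℕ) (hpq : p < q) (hm : 1 ≤ m) :
    E p (eVal q m) - E q (eVal p m) =
      2 • ∑ a ∈ Finset.Icc p (q-1), w (p+q-a) * eVal a m := by
  have hQ : (0:ℤ) ≤ (q:ℤ) := by exact_mod_cast Nat.zero_le q
  have hP : (0:ℤ) ≤ (p:ℤ) := by exact_mod_cast Nat.zero_le p
  have hM : (1:ℤ) ≤ (m:ℤ) := by exact_mod_cast hm
  have h1 : E p (eVal q m) =
      Phi ((p:ℤ)+(q:ℤ)+(m:ℤ)) (cA (p:ℤ) (q:ℤ) (m:ℤ))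
        + Phi ((p:ℤ)+(q:ℤ)+(m:ℤ)) (cB (p:ℤ) (q:ℤ) (m:ℤ)) := by
    rw [eVal_eq q m hm]
    exact expand p rfl hQ hM
  have h2 : E q (eVal p m) =
      Phi ((q:ℤ)+(p:ℤ)+(m:ℤ)) (cA (q:ℤ) (p:ℤ) (m:ℤ))
        + Phi ((q:ℤ)+(p:ℤ)+(m:ℤ)) (cB (q:ℤ) (p:ℤ) (m:ℤ)) := by
    rw [eVal_eq p m hm]
    exact expand q rfl hP hM
  rw [h1, h2, show ((q:ℤ)+(p:ℤ)+(m:ℤ)) = ((p:ℤ)+(q:ℤ)+(m:ℤ)) by ring,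
      rhs_expand p q m hpq hm, two_smul, ← sub_eq_zero]
  have hcomb : Phi ((p:ℤ)+(q:ℤ)+(m:ℤ)) (cA (p:ℤ) (q:ℤ) (m:ℤ))
        + Phi ((p:ℤ)+(q:ℤ)+(m:ℤ)) (cB (p:ℤ) (q:ℤ) (m:ℤ))
      - (Phi ((p:ℤ)+(q:ℤ)+(m:ℤ)) (cA (q:ℤ) (p:ℤ) (m:ℤ))
        + Phi ((p:ℤ)+(q:ℤ)+(m:ℤ)) (cB (q:ℤ) (p:ℤ) (m:ℤ)))
      - (Phi ((p:ℤ)+(q:ℤ)+(m:ℤ)) (cR (p:ℤ) (q:ℤ) (m:ℤ))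
        + Phi ((p:ℤ)+(q:ℤ)+(m:ℤ)) (cR (p:ℤ) (q:ℤ) (m:ℤ)))
      = Phi ((p:ℤ)+(q:ℤ)+(m:ℤ)) (Ctot (p:ℤ) (q:ℤ) (m:ℤ)) := by
    rw [Phi_add, Phi_add, Phi_add, Phi_sub, Phi_sub]
    rfl
  rw [hcomb]
  exact Phi_Ctot_zero _ _ _


lemma hsum_apply (s : Finset ℕ) (D : ℕ → Derivation ℚ B B) (x : B) :
    (∑ a ∈ s, D a) x = ∑ a ∈ s, D a x := by
  induction s using Finset.cons_induction with
  | empty => simp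
  | cons a s ha ih => rw [Finset.sum_cons, Derivation.add_apply, ih, Finset.sum_cons]

lemma E_X (r : ℕ) (i : ℕ) : E r (MvPolynomial.X i) = eVal r (i+1) :=
  MvPolynomial.mkDerivation_X _ _ _

lemma bracket_eq (p q : ℕ) (hpq : p < q) :
    ⁅E p, E q⁆ = (2:ℕ) • ∑ a ∈ Finset.Icc p (q-1), w (p+q-a) • E a := by
  apply MvPolynomial.derivation_ext
  intro i
  rw [Derivation.commutator_apply, Derivation.smul_apply, hsum_apply]
  rw [E_X q i, E_X p i]
  have hr : ∑ a ∈ Finset.Icc p (q-1), (w (p+q-a) • E a) (MvPolynomial.X i) =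
      ∑ a ∈ Finset.Icc p (q-1), w (p+q-a) * eVal a (i+1) :=
    Finset.sum_congr rfl fun a _ => by rw [Derivation.smul_apply, E_X a i, smul_eq_mul]
  rw [hr]
  exact core p q (i+1) hpq (by omega)

end CoHA

open CoHA

/-- For `0 ≤ p < q`:
`e_p ∘ e_q − e_q ∘ e_p = 2 · ∑_{a=p}^{q−1} f_{p+q−a} ∘ e_a`. -/
theorem comm_e_e_right (p q : ℕ) (hpq : p < q) :
    e p ∘ₗ e q - e q ∘ₗ e p = 2 • ∑ a ∈ Icc p (q - 1), f (p + q - a) ∘ₗ e a := by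
  apply LinearMap.ext
  intro x
  have h := congrArg (fun D : Derivation ℚ B B => D x) (bracket_eq p q hpq)
  rw [Derivation.commutator_apply, Derivation.smul_apply, hsum_apply] at h
  have happ : ∀ (r : ℕ) (y : B), e r y = E r y := fun r y => rfl
  simp only [LinearMap.sub_apply, LinearMap.comp_apply, LinearMap.smul_apply,
    LinearMap.sum_apply, happ]
  have hr : ∑ a ∈ Icc p (q-1), f (p+q-a) (E a x) =
      ∑ a ∈ Icc p (q-1), (w (p+q-a) • E a) x :=
    Finset.sum_congr rfl fun a _ => by
      rw [Derivation.smul_apply, smul_eq_mul, f, LinearMap.mulLeft_apply]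
  rw [hr]
  exact h

end
end

section
/- Let 0 ≤ p < q be integers. Then, as ℚ-linear endomorphisms of B, one has e_p ∘ e_q − e_q ∘ e_p = 2 · ∑_{a=p}^{q−1} e_a ∘ f_{p+q−a}. -/
/-!
`B = ℚ[w_1, w_2, …]` realized as `MvPolynomial ℕ ℚ`, where the `i`-th variable
`X i` is `w_{i+1}` (so every variable is some `w_n` with `n ≥ 1`).
`f n` is multiplication by `w n`, and `e p` is the unique ℚ-linear derivation
with the prescribed values on the variables.
-/

open MvPolynomial Finset

noncomputable section

def sg (x k : ℕ) : ℚ := if x < k then 1 else -1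

lemma sum_shape (p m : ℕ) (sml : Finset ℕ) (hsub : sml ⊆ Icc 1 (p+m-1)) (c : ℚ)
    (hpair : ∀ k ∈ Icc 1 (p + m - 1),
      (sg p k • (w k * w (p + m - k)) - c • (if k ∈ sml then (w k * w (p + m - k)) else 0))
      + (sg p (p+m-k) • (w (p+m-k) * w (p + m - (p+m-k)))
         - c • (if (p+m-k) ∈ sml then (w (p+m-k) * w (p + m - (p+m-k))) else 0)) = 0) :
    c • ∑ k ∈ sml, w k * w (p + m - k) = ∑ k ∈ Icc 1 (p + m - 1), sg p k • (w k * w (p + m - k)) := by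
  have h0 : ∑ k ∈ sml, w k * w (p+m-k)
      = ∑ k ∈ Icc 1 (p+m-1), (if k ∈ sml then (w k * w (p + m - k)) else 0) := by
    rw [Finset.sum_ite_mem, Finset.inter_eq_right.mpr hsub]
  rw [h0, eq_comm, ← sub_eq_zero, Finset.smul_sum, ← Finset.sum_sub_distrib]
  refine Finset.sum_involution (fun k _ => p + m - k) (fun k hk => hpair k hk) ?_ ?_ ?_
  · intro k hk hf heq
    have heq' : p + m - k = k := heq
    have h1 := hpair k hk
    have hBA := congrArg (fun t => sg p t • (w t * w (p+m-t)) - c • (if t ∈ sml then (w t * w (p+m-t)) else 0)) heq'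
    beta_reduce at hBA
    rw [hBA] at h1
    exact hf (add_self_eq_zero.mp h1)
  · intro k hk
    have := Finset.mem_Icc.mp hk
    show p + m - k ∈ Icc 1 (p + m - 1)
    rw [Finset.mem_Icc]
    omega
  · intro k hk
    show p + m - (p + m - k) = k
    have := Finset.mem_Icc.mp hk
    omega

lemma eVal_eq (p m : ℕ) (hm : 1 ≤ m) :
    eVal p m = ∑ k ∈ Icc 1 (p + m - 1), sg p k • (w k * w (p + m - k)) := by
  rcases lt_or_ge p m with h | h
  · rw [eVal, if_pos h]
    rw [show (∑ k ∈ Icc (p+1) (m-1), w k * w (p + m - k))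
        = (1:ℚ) • ∑ k ∈ Icc (p+1) (m-1), w k * w (p + m - k) from (one_smul _ _).symm]
    refine sum_shape p m _ (Finset.Icc_subset_Icc (by omega) (by omega)) 1 ?_
    intro k hk
    have hk' := Finset.mem_Icc.mp hk
    have e1 : p + m - (p + m - k) = k := by omega
    rw [e1]
    have hc : w (p+m-k) * w k = w k * w (p+m-k) := mul_comm _ _
    rw [hc]
    simp only [sg, Finset.mem_Icc]
    split_ifs <;> first | (simp only [one_smul, neg_one_smul]; ring1) | (exfalso; omega)
  · rw [eVal, if_neg (by omega)]
    rw [show (- ∑ k ∈ Icc m p, w k * w (p + m - k))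
        = (-1:ℚ) • ∑ k ∈ Icc m p, w k * w (p + m - k) from by rw [neg_one_smul]]
    refine sum_shape p m _ (Finset.Icc_subset_Icc (by omega) (by omega)) (-1) ?_
    intro k hk
    have hk' := Finset.mem_Icc.mp hk
    have e1 : p + m - (p + m - k) = k := by omega
    rw [e1]
    have hc : w (p+m-k) * w k = w k * w (p+m-k) := mul_comm _ _
    rw [hc]
    simp only [sg, Finset.mem_Icc]
    split_ifs <;> first | (simp only [one_smul, neg_one_smul]; ring1) | (exfalso; omega)
lemma Szero (p q : ℕ) (hpq : p < q) : ∑ a ∈ Icc p (q-1), eVal a (p+q-a) = 0 := by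
  have h1 : ∀ a ∈ Icc p (q-1), eVal a (p+q-a)
      = ∑ k ∈ Icc 1 (p+q-1), sg a k • (w k * w (p+q-k)) := by
    intro a ha
    have ha' := Finset.mem_Icc.mp ha
    rw [eVal_eq a (p+q-a) (by omega)]
    have e : a + (p+q-a) = p+q := by omega
    rw [e]
  rw [Finset.sum_congr rfl h1, ← Finset.sum_product']
  refine Finset.sum_involution (fun x _ => (p+q-1-x.1, p+q-x.2)) ?_ ?_ ?_ ?_
  · intro x hx
    obtain ⟨a, k⟩ := x
    simp only [Finset.mem_product, Finset.mem_Icc] at hx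
    show sg a k • (w k * w (p+q-k)) + sg (p+q-1-a) (p+q-k) • (w (p+q-k) * w (p+q-(p+q-k))) = 0
    rw [show p+q-(p+q-k) = k from by omega,
        show w (p+q-k) * w k = w k * w (p+q-k) from mul_comm _ _, ← add_smul]
    have hz : sg a k + sg (p+q-1-a) (p+q-k) = 0 := by
      simp only [sg]
      split_ifs <;> first | (exfalso; omega) | norm_num
    rw [hz, zero_smul]
  · intro x hx _
    obtain ⟨a, k⟩ := x
    simp only [Finset.mem_product, Finset.mem_Icc] at hx
    intro heq
    have h1 : p+q-1-a = a := congrArg Prod.fst heq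
    have h2 : p+q-k = k := congrArg Prod.snd heq
    omega
  · intro x hx
    obtain ⟨a, k⟩ := x
    simp only [Finset.mem_product, Finset.mem_Icc] at hx
    show ((p+q-1-a, p+q-k) : ℕ × ℕ) ∈ Icc p (q-1) ×ˢ Icc 1 (p+q-1)
    rw [Finset.mem_product, Finset.mem_Icc, Finset.mem_Icc]
    omega
  · intro x hx
    obtain ⟨a, k⟩ := x
    simp only [Finset.mem_product, Finset.mem_Icc] at hx
    show ((p+q-1-(p+q-1-a), p+q-(p+q-k)) : ℕ × ℕ) = (a, k)
    rw [Prod.mk.injEq]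
    omega
def D (p : ℕ) : Derivation ℚ B B := MvPolynomial.mkDerivation ℚ (fun i : ℕ => eVal p (i + 1))

lemma D_w (p k : ℕ) (hk : 1 ≤ k) : D p (w k) = eVal p k := by
  have h : D p (MvPolynomial.X (k-1)) = eVal p (k-1+1) := by rw [D, MvPolynomial.mkDerivation_X]
  rw [w, h]
  congr 1
  omega

def Dl (T : ℕ) : Finset (ℕ × ℕ) :=
  (Finset.range (T+1) ×ˢ Finset.range (T+1)).filter
    fun ab => 1 ≤ ab.1 ∧ 1 ≤ ab.2 ∧ ab.1 + ab.2 + 1 ≤ T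

def Cc (x y m a b : ℕ) : ℚ :=
  if x < a + b then (sg y (a+b-x) + sg y (y+m-(a+b-x))) * sg x a else 0

def Gg (p q m a b : ℕ) : ℚ :=
  if p + m ≤ a + b ∧ a + b + 1 ≤ q + m then sg (a+b-m) b else 0

lemma expandD (x y m T : ℕ) (hm : 1 ≤ m) (hT : T = x + y + m) :
    D x (eVal y m)
      = ∑ ab ∈ Dl T, Cc x y m ab.1 ab.2 • (w ab.1 * w ab.2 * w (T - ab.1 - ab.2)) := by
  rw [eVal_eq y m hm, map_sum]
  have s1 : ∀ k ∈ Icc 1 (y + m - 1),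
      (D x) (sg y k • (w k * w (y + m - k)))
      = sg y k • (w k * eVal x (y+m-k)) + sg y k • (w (y+m-k) * eVal x k) := by
    intro k hk
    have hk' := Finset.mem_Icc.mp hk
    rw [Derivation.map_smul, Derivation.leibniz, D_w x k (by omega), D_w x (y+m-k) (by omega),
        smul_eq_mul, smul_eq_mul, smul_add]
  rw [Finset.sum_congr rfl s1, Finset.sum_add_distrib]
  have s2 : ∑ k ∈ Icc 1 (y+m-1), sg y k • (w k * eVal x (y+m-k))
      = ∑ k ∈ Icc 1 (y+m-1), sg y (y+m-k) • (w (y+m-k) * eVal x k) := by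
    refine Finset.sum_nbij' (fun k => y+m-k) (fun k => y+m-k) ?_ ?_ ?_ ?_ ?_
    · intro k hk
      have := Finset.mem_Icc.mp hk
      show y + m - k ∈ Icc 1 (y+m-1)
      rw [Finset.mem_Icc]
      omega
    · intro k hk
      have := Finset.mem_Icc.mp hk
      show y + m - k ∈ Icc 1 (y+m-1)
      rw [Finset.mem_Icc]
      omega
    · intro k hk
      have := Finset.mem_Icc.mp hk
      show y + m - (y + m - k) = k
      omega
    · intro k hk
      have := Finset.mem_Icc.mp hk
      show y + m - (y + m - k) = k
      omega
    · intro k hk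
      have := Finset.mem_Icc.mp hk
      show sg y k • (w k * eVal x (y+m-k)) = sg y (y+m-(y+m-k)) • (w (y+m-(y+m-k)) * eVal x (y+m-k))
      rw [show y+m-(y+m-k) = k from by omega]
  rw [s2, ← Finset.sum_add_distrib]
  have s3 : ∀ k ∈ Icc 1 (y+m-1),
      sg y (y+m-k) • (w (y+m-k) * eVal x k) + sg y k • (w (y+m-k) * eVal x k)
      = ∑ j ∈ Icc 1 (x+k-1),
          ((sg y k + sg y (y+m-k)) * sg x j) • (w j * w (x+k-j) * w (y+m-k)) := by
    intro k hk
    have hk' := Finset.mem_Icc.mp hk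
    rw [← add_smul, add_comm (sg y (y+m-k)) (sg y k), eVal_eq x k hk'.1, Finset.mul_sum,
        Finset.smul_sum]
    refine Finset.sum_congr rfl fun j hj => ?_
    rw [mul_smul_comm, smul_smul]
    congr 1
    ring
  rw [Finset.sum_congr rfl s3, Finset.sum_sigma']
  have s4 : ∑ kj ∈ (Icc 1 (y+m-1)).sigma (fun k => Icc 1 (x+k-1)),
        ((sg y kj.1 + sg y (y+m-kj.1)) * sg x kj.2) • (w kj.2 * w (x+kj.1-kj.2) * w (y+m-kj.1))
      = ∑ ab ∈ (Dl T).filter (fun ab => x + 1 ≤ ab.1 + ab.2),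
        Cc x y m ab.1 ab.2 • (w ab.1 * w ab.2 * w (T - ab.1 - ab.2)) := by
    refine Finset.sum_nbij' (fun kj => (kj.2, x + kj.1 - kj.2)) (fun ab => ⟨ab.1 + ab.2 - x, ab.1⟩)
      ?_ ?_ ?_ ?_ ?_
    · intro kj hkj
      obtain ⟨k, j⟩ := kj
      simp only [Finset.mem_sigma, Finset.mem_Icc] at hkj
      simp only [Dl, Finset.mem_filter, Finset.mem_product, Finset.mem_range]
      omega
    · intro ab hab
      obtain ⟨a, b⟩ := ab
      simp only [Dl, Finset.mem_filter, Finset.mem_product, Finset.mem_range] at hab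
      simp only [Finset.mem_sigma, Finset.mem_Icc]
      omega
    · intro kj hkj
      obtain ⟨k, j⟩ := kj
      simp only [Finset.mem_sigma, Finset.mem_Icc] at hkj
      have e1 : j + (x + k - j) - x = k := by omega
      simp only [e1]
    · intro ab hab
      obtain ⟨a, b⟩ := ab
      simp only [Dl, Finset.mem_filter, Finset.mem_product, Finset.mem_range] at hab
      have e1 : x + (a + b - x) - a = b := by omega
      simp only [e1]
    · intro kj hkj
      obtain ⟨k, j⟩ := kj
      simp only [Finset.mem_sigma, Finset.mem_Icc] at hkj
      have e1 : j + (x + k - j) = x + k := by omega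
      have e2 : x + k - x = k := by omega
      have e3 : T - j - (x + k - j) = y + m - k := by omega
      simp only [Cc, e1, e2, e3]
      rw [if_pos (by omega)]
  rw [s4]
  refine Finset.sum_subset (Finset.filter_subset _ _) ?_
  intro ab hab hnot
  simp only [Dl, Finset.mem_filter, Finset.mem_product, Finset.mem_range] at hab hnot
  rw [Cc, if_neg (by omega), zero_smul]
lemma expandR (p q m T : ℕ) (hpq : p < q) (hm : 1 ≤ m) (hT : T = p + q + m) :
    ∑ a ∈ Icc p (q-1), w (p+q-a) * eVal a m
      = ∑ ab ∈ Dl T, Gg p q m ab.1 ab.2 • (w ab.1 * w ab.2 * w (T - ab.1 - ab.2)) := by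
  have s1 : ∀ a ∈ Icc p (q-1), w (p+q-a) * eVal a m
      = ∑ j ∈ Icc 1 (a+m-1), sg a j • (w (a+m-j) * w j * w (p+q-a)) := by
    intro a ha
    have ha' := Finset.mem_Icc.mp ha
    rw [eVal_eq a m hm, Finset.mul_sum]
    refine Finset.sum_congr rfl fun j hj => ?_
    rw [mul_smul_comm]
    congr 1
    ring
  rw [Finset.sum_congr rfl s1, Finset.sum_sigma']
  have s2 : ∑ aj ∈ (Icc p (q-1)).sigma (fun a => Icc 1 (a+m-1)),
        sg aj.1 aj.2 • (w (aj.1+m-aj.2) * w aj.2 * w (p+q-aj.1))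
      = ∑ ab ∈ (Dl T).filter (fun ab => p + m ≤ ab.1 + ab.2 ∧ ab.1 + ab.2 + 1 ≤ q + m),
        Gg p q m ab.1 ab.2 • (w ab.1 * w ab.2 * w (T - ab.1 - ab.2)) := by
    refine Finset.sum_nbij' (fun aj => (aj.1 + m - aj.2, aj.2)) (fun ab => ⟨ab.1 + ab.2 - m, ab.2⟩)
      ?_ ?_ ?_ ?_ ?_
    · intro aj haj
      obtain ⟨a, j⟩ := aj
      simp only [Finset.mem_sigma, Finset.mem_Icc] at haj
      simp only [Dl, Finset.mem_filter, Finset.mem_product, Finset.mem_range]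
      omega
    · intro ab hab
      obtain ⟨a, b⟩ := ab
      simp only [Dl, Finset.mem_filter, Finset.mem_product, Finset.mem_range] at hab
      simp only [Finset.mem_sigma, Finset.mem_Icc]
      omega
    · intro aj haj
      obtain ⟨a, j⟩ := aj
      simp only [Finset.mem_sigma, Finset.mem_Icc] at haj
      have e1 : a + m - j + j - m = a := by omega
      simp only [e1]
    · intro ab hab
      obtain ⟨a, b⟩ := ab
      simp only [Dl, Finset.mem_filter, Finset.mem_product, Finset.mem_range] at hab
      have e1 : a + b - m + m - b = a := by omega
      simp only [e1]
    · intro aj haj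
      obtain ⟨a, j⟩ := aj
      simp only [Finset.mem_sigma, Finset.mem_Icc] at haj
      have e1 : a + m - j + j = a + m := by omega
      have e2 : a + m - m = a := by omega
      have e3 : T - (a + m - j) - j = p + q - a := by omega
      simp only [Gg, e1, e2, e3]
      rw [if_pos (by omega)]
  rw [s2]
  refine Finset.sum_subset (Finset.filter_subset _ _) ?_
  intro ab hab hnot
  simp only [Dl, Finset.mem_filter, Finset.mem_product, Finset.mem_range] at hab hnot
  rw [Gg, if_neg (by omega), zero_smul]
lemma lemC (x y m a b c : ℕ) (hm : 1 ≤ m) (ha : 1 ≤ a) (hb : 1 ≤ b) (hc : 1 ≤ c)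
    (habc : a + b + c = x + y + m) :
    Cc x y m a b = (sg y c + (if c < m then (1:ℚ) else -1)) * sg x a := by
  unfold Cc sg
  split_ifs <;> first | (exfalso; omega) | norm_num

lemma lemG (p q m a b c : ℕ) (hpq : p < q) (hm : 1 ≤ m) (ha : 1 ≤ a) (hb : 1 ≤ b) (hc : 1 ≤ c)
    (habc : a + b + c = p + q + m) :
    (2:ℚ) * Gg p q m a b = (sg p c - sg q c) * (if a < m then (1:ℚ) else -1) := by
  unfold Gg sg
  split_ifs <;> first | (exfalso; omega) | norm_num

lemma key (p q m T : ℕ) (hpq : p < q) (hm : 1 ≤ m) (hT : T = p + q + m) :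
    D p (eVal q m) - D q (eVal p m)
      = (2:ℚ) • ∑ a ∈ Icc p (q-1), w (p+q-a) * eVal a m := by
  rw [expandD p q m T hm hT, expandD q p m T hm (by omega), expandR p q m T hpq hm hT,
      Finset.smul_sum, ← Finset.sum_sub_distrib]
  rw [← sub_eq_zero, ← Finset.sum_sub_distrib]
  have s5 : ∀ ab ∈ Dl T,
      (Cc p q m ab.1 ab.2 • (w ab.1 * w ab.2 * w (T - ab.1 - ab.2))
        - Cc q p m ab.1 ab.2 • (w ab.1 * w ab.2 * w (T - ab.1 - ab.2)))
      - (2:ℚ) • Gg p q m ab.1 ab.2 • (w ab.1 * w ab.2 * w (T - ab.1 - ab.2))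
      = (Cc p q m ab.1 ab.2 - Cc q p m ab.1 ab.2 - (2:ℚ) * Gg p q m ab.1 ab.2)
          • (w ab.1 * w ab.2 * w (T - ab.1 - ab.2)) := by
    intro ab _
    rw [smul_smul, ← sub_smul, ← sub_smul]
  rw [Finset.sum_congr rfl s5]
  refine Finset.sum_involution (fun ab _ => (T - ab.1 - ab.2, ab.2)) ?_ ?_ ?_ ?_
  · intro ab hab
    obtain ⟨a, b⟩ := ab
    simp only [Dl, Finset.mem_filter, Finset.mem_product, Finset.mem_range] at hab
    show (Cc p q m a b - Cc q p m a b - (2:ℚ) * Gg p q m a b) • (w a * w b * w (T - a - b))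
      + (Cc p q m (T-a-b) b - Cc q p m (T-a-b) b - (2:ℚ) * Gg p q m (T-a-b) b)
          • (w (T-a-b) * w b * w (T - (T-a-b) - b)) = 0
    rw [show T - (T-a-b) - b = a from by omega,
        show w (T-a-b) * w b * w a = w a * w b * w (T-a-b) from by ring, ← add_smul]
    have hz : (Cc p q m a b - Cc q p m a b - (2:ℚ) * Gg p q m a b)
        + (Cc p q m (T-a-b) b - Cc q p m (T-a-b) b - (2:ℚ) * Gg p q m (T-a-b) b) = 0 := by
      rw [lemC p q m a b (T-a-b) hm (by omega) (by omega) (by omega) (by omega),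
          lemC q p m a b (T-a-b) hm (by omega) (by omega) (by omega) (by omega),
          lemG p q m a b (T-a-b) hpq hm (by omega) (by omega) (by omega) (by omega),
          lemC p q m (T-a-b) b a hm (by omega) (by omega) (by omega) (by omega),
          lemC q p m (T-a-b) b a hm (by omega) (by omega) (by omega) (by omega),
          lemG p q m (T-a-b) b a hpq hm (by omega) (by omega) (by omega) (by omega)]
      ring
    rw [hz, zero_smul]
  · intro ab hab hne heq
    obtain ⟨a, b⟩ := ab
    simp only [Dl, Finset.mem_filter, Finset.mem_product, Finset.mem_range] at hab
    have h1 : T - a - b = a := congrArg Prod.fst heq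
    apply hne
    show (Cc p q m a b - Cc q p m a b - (2:ℚ) * Gg p q m a b) • (w a * w b * w (T - a - b)) = 0
    have hz0 : Cc p q m a b - Cc q p m a b - (2:ℚ) * Gg p q m a b = 0 := by
      rw [lemC p q m a b a hm (by omega) (by omega) (by omega) (by omega),
          lemC q p m a b a hm (by omega) (by omega) (by omega) (by omega),
          lemG p q m a b a hpq hm (by omega) (by omega) (by omega) (by omega)]
      ring
    rw [hz0, zero_smul]
  · intro ab hab
    obtain ⟨a, b⟩ := ab
    simp only [Dl, Finset.mem_filter, Finset.mem_product, Finset.mem_range] at hab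
    show ((T - a - b, b) : ℕ × ℕ) ∈ Dl T
    simp only [Dl, Finset.mem_filter, Finset.mem_product, Finset.mem_range]
    omega
  · intro ab hab
    obtain ⟨a, b⟩ := ab
    simp only [Dl, Finset.mem_filter, Finset.mem_product, Finset.mem_range] at hab
    show ((T - (T - a - b) - b, b) : ℕ × ℕ) = (a, b)
    rw [Prod.mk.injEq]
    omega

/-- For `0 ≤ p < q`:
`e_p ∘ e_q − e_q ∘ e_p = 2 · ∑_{a=p}^{q−1} e_a ∘ f_{p+q−a}`. -/
theorem comm_e_e_left (p q : ℕ) (hpq : p < q) :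
    e p ∘ₗ e q - e q ∘ₗ e p = 2 • ∑ a ∈ Icc p (q - 1), e a ∘ₗ f (p + q - a) := by
  have hsum : ∀ (s : Finset ℕ) (Ds : ℕ → Derivation ℚ B B) (z : B),
      (∑ a ∈ s, Ds a) z = ∑ a ∈ s, Ds a z := by
    intro s Ds z
    induction s using Finset.cons_induction with
    | empty => simp
    | cons a s ha ih => rw [Finset.sum_cons, Finset.sum_cons, Derivation.add_apply, ih]
  have hbr : (⁅D p, D q⁆ : Derivation ℚ B B)
      = (2:ℚ) • ∑ a ∈ Icc p (q-1), w (p+q-a) • D a := by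
    apply MvPolynomial.derivation_ext
    intro i
    rw [Derivation.commutator_apply]
    have hq : D q (X i) = eVal q (i+1) := by rw [D, MvPolynomial.mkDerivation_X]
    have hp : D p (X i) = eVal p (i+1) := by rw [D, MvPolynomial.mkDerivation_X]
    rw [hq, hp, key p q (i+1) (p+q+(i+1)) hpq (by omega) rfl]
    rw [Derivation.smul_apply, hsum]
    congr 1
    refine Finset.sum_congr rfl fun a ha => ?_
    rw [Derivation.smul_apply, smul_eq_mul]
    congr 1
    rw [D, MvPolynomial.mkDerivation_X]
  apply LinearMap.ext
  intro z
  have hL : (e p ∘ₗ e q - e q ∘ₗ e p) z = (⁅D p, D q⁆ : Derivation ℚ B B) z := rfl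
  rw [hL, hbr, Derivation.smul_apply, hsum]
  rw [LinearMap.smul_apply, LinearMap.sum_apply]
  have hterm : ∀ a ∈ Icc p (q-1), (e a ∘ₗ f (p+q-a)) z
      = w (p+q-a) * D a z + eVal a (p+q-a) * z := by
    intro a ha
    have ha' := Finset.mem_Icc.mp ha
    show D a (w (p+q-a) * z) = _
    rw [Derivation.leibniz, smul_eq_mul, smul_eq_mul, D_w a (p+q-a) (by omega),
        mul_comm z (eVal a (p+q-a))]
  rw [Finset.sum_congr rfl hterm, Finset.sum_add_distrib, ← Finset.sum_mul, Szero p q hpq,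
      zero_mul, add_zero]
  have hpt : ∀ a ∈ Icc p (q-1), (w (p+q-a) • D a) z = w (p+q-a) * D a z := by
    intro a _
    rw [Derivation.smul_apply, smul_eq_mul]
  rw [Finset.sum_congr rfl hpt, two_smul, two_smul]


end
end

section
/- Let 0 ≤ p < q be integers. Then ∑_{a=p}^{q−1} e_a(w_{p+q−a}) = 0 in B. -/
/-!
`B = ℚ[w_1, w_2, …]` realized as `MvPolynomial ℕ ℚ`, where the `i`-th variable
`X i` is `w_{i+1}` (so every variable is some `w_n` with `n ≥ 1`).
`f n` is multiplication by `w n`, and `e p` is the unique ℚ-linear derivation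
with the prescribed values on the variables.
-/

open MvPolynomial Finset

noncomputable section

/-- For `0 ≤ p < q`: `∑_{a=p}^{q−1} e_a(w_{p+q−a}) = 0` in `B`. -/
theorem telescoping_sum (p q : ℕ) (hpq : p < q) :
    ∑ a ∈ Icc p (q - 1), e a (w (p + q - a)) = 0 := by
  set g : ℕ → B := fun k => w k * w (p + q - k) with hg
  have key : ∀ a ∈ Icc p (q - 1), e a (w (p + q - a)) =
      (∑ k ∈ range (p + q - a), g k) - (∑ k ∈ range (a + 1), g k) := by
    intro a ha
    simp only [mem_Icc] at ha
    obtain ⟨h1, h2⟩ := ha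
    have he : e a (w (p + q - a)) = eVal a (p + q - a) := by
      show (MvPolynomial.mkDerivation ℚ (fun i : ℕ => eVal a (i + 1)))
        (X (p + q - a - 1)) = _
      rw [MvPolynomial.mkDerivation_X]
      have hx : p + q - a - 1 + 1 = p + q - a := by omega
      rw [hx]
    rw [he, eVal]
    have harith : ∀ k, w k * w (a + (p + q - a) - k) = g k := by
      intro k
      have : a + (p + q - a) - k = p + q - k := by omega
      rw [this]
    by_cases hc : a < p + q - a
    · rw [if_pos hc]
      simp only [harith]
      have hIcc : Icc (a + 1) (p + q - a - 1) = Ico (a + 1) (p + q - a) := by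
        ext x; simp only [mem_Icc, mem_Ico]; omega
      rw [hIcc, Finset.sum_Ico_eq_sub _ (by omega)]
    · rw [if_neg hc]
      simp only [harith]
      have hIcc : Icc (p + q - a) a = Ico (p + q - a) (a + 1) := by
        ext x; simp only [mem_Icc, mem_Ico]; omega
      rw [hIcc, Finset.sum_Ico_eq_sub _ (by omega)]
      ring
  rw [Finset.sum_congr rfl key, Finset.sum_sub_distrib]
  have hre : ∑ a ∈ Icc p (q - 1), ∑ k ∈ range (p + q - a), g k
      = ∑ a ∈ Icc p (q - 1), ∑ k ∈ range (a + 1), g k := by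
    apply Finset.sum_nbij' (fun a => p + q - 1 - a) (fun a => p + q - 1 - a)
    · intro a ha; simp only [mem_Icc] at *; omega
    · intro a ha; simp only [mem_Icc] at *; omega
    · intro a ha; simp only [mem_Icc] at ha; omega
    · intro a ha
      simp only [mem_Icc] at ha
      obtain ⟨h1, h2⟩ := ha
      have hle : a ≤ p + q - 1 := by omega
      exact Nat.sub_sub_self hle
    · intro a ha
      simp only [mem_Icc] at ha
      have hx : p + q - 1 - a + 1 = p + q - a := by omega
      rw [hx]

  rw [hre, sub_self]

end
end

section
/- Let 0 ≤ p < q be integers. Then, as ℚ-linear endomorphisms of B, one has e_p ∘ f_{q+1} − f_{q+1} ∘ e_p = ∑_{k=p+1}^{q} f_k ∘ f_{p+q+1−k}. -/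
/-!
`B = ℚ[w_1, w_2, …]` realized as `MvPolynomial ℕ ℚ`, where the `i`-th variable
`X i` is `w_{i+1}` (so every variable is some `w_n` with `n ≥ 1`).
`f n` is multiplication by `w n`, and `e p` is the unique ℚ-linear derivation
with the prescribed values on the variables.
-/

open MvPolynomial Finset

noncomputable section

/-- For `0 ≤ p < q`:
`e_p ∘ f_{q+1} − f_{q+1} ∘ e_p = ∑_{k=p+1}^{q} f_k ∘ f_{p+q+1−k}`. -/
theorem comm_e_f_lt (p q : ℕ) (hpq : p < q) :
    e p ∘ₗ f (q + 1) - f (q + 1) ∘ₗ e p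
      = ∑ k ∈ Icc (p + 1) q, f k ∘ₗ f (p + q + 1 - k) := by
  apply LinearMap.ext; intro x
  have hleib : (e p) (w (q + 1) * x) = w (q + 1) * (e p) x + eVal p (q + 1) * x := by
    have h := (MvPolynomial.mkDerivation ℚ (fun i : ℕ => eVal p (i + 1))).leibniz
      (w (q + 1)) x
    have hX : (MvPolynomial.mkDerivation ℚ (fun i : ℕ => eVal p (i + 1))) (w (q + 1))
        = eVal p (q + 1) := by
      simp [w, MvPolynomial.mkDerivation_X]
    simp only [e, hX, smul_eq_mul, Derivation.coeFn_coe] at h ⊢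
    rw [h]; ring
  simp only [LinearMap.sub_apply, LinearMap.comp_apply, LinearMap.sum_apply, f,
    LinearMap.mulLeft_apply, hleib]
  rw [eVal, if_pos (by omega)]
  have : q + 1 - 1 = q := rfl
  rw [this]
  rw [Finset.sum_mul]
  ring_nf
  exact Finset.sum_congr rfl fun k hk => by ring

end
end

section
/- Let p > q ≥ 0 be integers. Then, as ℚ-linear endomorphisms of B, one has e_p ∘ f_{q+1} − f_{q+1} ∘ e_p = −∑_{k=q+1}^{p} f_k ∘ f_{p+q+1−k}. -/
/-!
`B = ℚ[w_1, w_2, …]` realized as `MvPolynomial ℕ ℚ`, where the `i`-th variable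
`X i` is `w_{i+1}` (so every variable is some `w_n` with `n ≥ 1`).
`f n` is multiplication by `w n`, and `e p` is the unique ℚ-linear derivation
with the prescribed values on the variables.
-/

open MvPolynomial Finset

noncomputable section

/-- For `p > q ≥ 0`:
`e_p ∘ f_{q+1} − f_{q+1} ∘ e_p = −∑_{k=q+1}^{p} f_k ∘ f_{p+q+1−k}`. -/
theorem comm_e_f_gt (p q : ℕ) (hpq : q < p) :
    e p ∘ₗ f (q + 1) - f (q + 1) ∘ₗ e p
      = - ∑ k ∈ Icc (q + 1) p, f k ∘ₗ f (p + q + 1 - k) := by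
  apply LinearMap.ext; intro x
  have hleib : (e p) (w (q + 1) * x) = eVal p (q + 1) * x + w (q + 1) * (e p) x := by
    have := Derivation.leibniz (MvPolynomial.mkDerivation ℚ (fun i : ℕ => eVal p (i + 1)))
      (w (q + 1)) x
    simpa [e, w, smul_eq_mul, mul_comm, MvPolynomial.mkDerivation_X] using this
  simp only [LinearMap.sub_apply, LinearMap.comp_apply, LinearMap.neg_apply,
    LinearMap.sum_apply, f, LinearMap.mulLeft_apply, hleib]
  have hev : eVal p (q + 1) = - ∑ k ∈ Icc (q + 1) p, w k * w (p + q + 1 - k) := by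
    rw [eVal, if_neg (by omega), add_assoc p q 1]
  rw [hev]
  ring_nf
  rw [Finset.sum_mul]
  simp [mul_assoc]
  exact Finset.sum_congr rfl (fun _ _ => by ring)

end
end

section
/- The ℚ-linear endomorphism c of V ⊗_ℚ V defined below is an involution: c ∘ c = id on V ⊗_ℚ V. -/
/-!
`V` is the free ℚ-vector space with basis `ε_p` (`p ≥ 0`) and `φ_n` (`n ≥ 1`),
realized as `(ℕ ⊕ ℕ) →₀ ℚ`, where `Sum.inl p ↔ ε_p` and `Sum.inr j ↔ φ_{j+1}`.
The operator `c` on `V ⊗[ℚ] V` is defined on the basis of the tensor product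
by the coefficient formulas of Theorem 2 (Section 4.1) of the paper.
-/

open TensorProduct

noncomputable section

abbrev V : Type := (ℕ ⊕ ℕ) →₀ ℚ

/-- The basis vector `ε_p` (for `p ≥ 0`). -/
def ε (p : ℕ) : V := Finsupp.single (Sum.inl p) 1

/-- The basis vector `φ_n` (for `n ≥ 1`). -/
def φ (n : ℕ) : V := Finsupp.single (Sum.inr (n - 1)) 1

/-- `δ(p,q,a) = 1` if `p ≤ a < q`, `= −1` if `q ≤ a < p`, `= 0` otherwise. -/
def δ (p q a : ℕ) : ℚ :=
  if p ≤ a ∧ a < q then 1 else if q ≤ a ∧ a < p then -1 else 0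

/-- The value of `c` on the basis vectors of `V ⊗ V`:
`c(ε_p ⊗ ε_q) = ε_q ⊗ ε_p + ∑_a δ(p,q,a)·(ε_a ⊗ φ_{p+q−a} + φ_{p+q−a} ⊗ ε_a)`,
`c(ε_p ⊗ φ_{q+1}) = φ_{q+1} ⊗ ε_p + ∑_a δ(p,q,a)·φ_{a+1} ⊗ φ_{p+q−a}`,
`c(φ_{p+1} ⊗ ε_q) = ε_q ⊗ φ_{p+1} + ∑_a δ(p,q,a)·φ_{a+1} ⊗ φ_{p+q−a}`,
`c(φ_m ⊗ φ_n) = φ_n ⊗ φ_m`.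
(The sums over all `a ≥ 0` are finite, since `δ(p,q,a) = 0` unless
`min p q ≤ a < max p q`; the range `Finset.range (p+q+1)` contains
all such `a`.) -/
def cFun : (ℕ ⊕ ℕ) × (ℕ ⊕ ℕ) → V ⊗[ℚ] V
  | (Sum.inl p, Sum.inl q) =>
      ε q ⊗ₜ ε p + ∑ a ∈ Finset.range (p + q + 1),
        δ p q a • (ε a ⊗ₜ φ (p + q - a) + φ (p + q - a) ⊗ₜ ε a)
  | (Sum.inl p, Sum.inr j) =>
      φ (j + 1) ⊗ₜ ε p + ∑ a ∈ Finset.range (p + j + 1),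
        δ p j a • (φ (a + 1) ⊗ₜ φ (p + j - a))
  | (Sum.inr i, Sum.inl q) =>
      ε q ⊗ₜ φ (i + 1) + ∑ a ∈ Finset.range (i + q + 1),
        δ i q a • (φ (a + 1) ⊗ₜ φ (i + q - a))
  | (Sum.inr i, Sum.inr j) => φ (j + 1) ⊗ₜ φ (i + 1)

/-- The standard basis of `V`. -/
def bV : Module.Basis (ℕ ⊕ ℕ) ℚ V := Finsupp.basisSingleOne

/-- The ℚ-linear operator `c` on `V ⊗[ℚ] V`. -/
def c : V ⊗[ℚ] V →ₗ[ℚ] V ⊗[ℚ] V := (bV.tensorProduct bV).constr ℚ cFun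

/-! ### Auxiliary lemmas for the involution proof -/

/-- Alternative basis vector notation: `ψ k = φ (k+1)`. -/
def ψ (k : ℕ) : V := Finsupp.single (Sum.inr k) 1

lemma δ_swap (p q a : ℕ) : δ q p a = -δ p q a := by
  unfold δ; split_ifs <;> norm_num <;> omega

lemma δ_supp {p q a : ℕ} (h : ¬((p ≤ a ∧ a < q) ∨ (q ≤ a ∧ a < p))) : δ p q a = 0 := by
  unfold δ; split_ifs <;> tauto

lemma δ_rev {p q a : ℕ} (h : (p ≤ a ∧ a < q) ∨ (q ≤ a ∧ a < p)) :
    δ p q (p + q - 1 - a) = δ p q a := by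
  rcases h with ⟨h1, h2⟩ | ⟨h1, h2⟩
  · unfold δ
    rw [if_pos (show p ≤ p + q - 1 - a ∧ p + q - 1 - a < q by omega), if_pos ⟨h1, h2⟩]
  · unfold δ
    rw [if_neg (show ¬(p ≤ p + q - 1 - a ∧ p + q - 1 - a < q) by omega),
      if_pos (show q ≤ p + q - 1 - a ∧ p + q - 1 - a < p by omega),
      if_neg (show ¬(p ≤ a ∧ a < q) by omega), if_pos ⟨h1, h2⟩]

lemma c_single (i j : ℕ ⊕ ℕ) :
    c (Finsupp.single i (1 : ℚ) ⊗ₜ[ℚ] Finsupp.single j (1 : ℚ)) = cFun (i, j) := by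
  have h : (Finsupp.single i (1 : ℚ)) ⊗ₜ[ℚ] (Finsupp.single j (1 : ℚ))
      = (bV.tensorProduct bV) (i, j) := by
    simp [bV, Module.Basis.tensorProduct_apply]
  rw [h, c, Module.Basis.constr_basis]

lemma c_ee (p q : ℕ) : c (ε p ⊗ₜ[ℚ] ε q) =
    ε q ⊗ₜ ε p + ∑ a ∈ Finset.range (p + q + 1),
      δ p q a • (ε a ⊗ₜ ψ (p + q - a - 1) + ψ (p + q - a - 1) ⊗ₜ ε a) :=
  c_single (Sum.inl p) (Sum.inl q)

lemma c_ef (p m : ℕ) : c (ε p ⊗ₜ[ℚ] ψ m) =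
    ψ m ⊗ₜ ε p + ∑ a ∈ Finset.range (p + m + 1),
      δ p m a • (ψ a ⊗ₜ ψ (p + m - a - 1)) :=
  c_single (Sum.inl p) (Sum.inr m)

lemma c_fe (m q : ℕ) : c (ψ m ⊗ₜ[ℚ] ε q) =
    ε q ⊗ₜ ψ m + ∑ a ∈ Finset.range (m + q + 1),
      δ m q a • (ψ a ⊗ₜ ψ (m + q - a - 1)) :=
  c_single (Sum.inr m) (Sum.inl q)

lemma c_ff (m n : ℕ) : c (ψ m ⊗ₜ[ℚ] ψ n) = ψ n ⊗ₜ ψ m :=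
  c_single (Sum.inr m) (Sum.inr n)

/-- Opposite `δ`-weighted sums over the same range cancel. -/
lemma cancel_sum {s : Finset ℕ} (p q : ℕ) (T : ℕ → V ⊗[ℚ] V) (x : V ⊗[ℚ] V) :
    (x + ((∑ a ∈ s, δ q p a • T a) + ∑ a ∈ s, δ p q a • T a)) = x := by
  rw [← Finset.sum_add_distrib, Finset.sum_eq_zero, add_zero]
  intro a _
  rw [δ_swap, ← add_smul, neg_add_cancel, zero_smul]

/-- Key cancellation: applying `c` to the symmetric mixed term gives it back. -/
lemma key1 (a m : ℕ) : c (ε a ⊗ₜ[ℚ] ψ m) + c (ψ m ⊗ₜ[ℚ] ε a)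
    = ε a ⊗ₜ[ℚ] ψ m + ψ m ⊗ₜ[ℚ] ε a := by
  rw [c_ef, c_fe, Nat.add_comm m a, add_add_add_comm, cancel_sum, add_comm]

/-- Reversal of the inner `φ ⊗ φ` sum under `a ↦ p + q - 1 - a`. -/
lemma sum_rev (p q : ℕ) :
    ∑ a ∈ Finset.range (p + q + 1), δ p q a • (ψ (p + q - 1 - a) ⊗ₜ[ℚ] ψ a)
    = ∑ a ∈ Finset.range (p + q + 1), δ p q a • (ψ a ⊗ₜ[ℚ] ψ (p + q - 1 - a)) := by
  have hfil : ∀ F : ℕ → V ⊗[ℚ] V,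
      (∑ a ∈ (Finset.range (p + q + 1)).filter
        (fun a => (p ≤ a ∧ a < q) ∨ (q ≤ a ∧ a < p)), δ p q a • F a)
      = ∑ a ∈ Finset.range (p + q + 1), δ p q a • F a := by
    intro F
    apply Finset.sum_filter_of_ne
    intro x _ hx
    by_contra h
    exact hx (by rw [δ_supp h, zero_smul])
  rw [← hfil, ← hfil]
  apply Finset.sum_nbij' (fun a => p + q - 1 - a) (fun a => p + q - 1 - a)
  · intro a ha
    simp only [Finset.mem_filter, Finset.mem_range] at ha ⊢
    omega
  · intro a ha
    simp only [Finset.mem_filter, Finset.mem_range] at ha ⊢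
    omega
  · intro a ha
    simp only [Finset.mem_filter, Finset.mem_range] at ha
    omega
  · intro a ha
    simp only [Finset.mem_filter, Finset.mem_range] at ha
    omega
  · intro a ha
    simp only [Finset.mem_filter, Finset.mem_range] at ha
    rw [δ_rev ha.2, show p + q - 1 - (p + q - 1 - a) = a by omega]

lemma btp_apply (i j : ℕ ⊕ ℕ) : (bV.tensorProduct bV) (i, j)
    = Finsupp.single i (1 : ℚ) ⊗ₜ[ℚ] Finsupp.single j (1 : ℚ) := by
  simp [bV, Module.Basis.tensorProduct_apply]

/-- The operator `c` is an involution: `c ∘ c = id`. -/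
theorem c_involution : c ∘ₗ c = LinearMap.id := by
  apply (bV.tensorProduct bV).ext
  rintro ⟨p | m, q | n⟩ <;>
    rw [LinearMap.comp_apply, LinearMap.id_apply, btp_apply]
  · -- ε ⊗ ε
    show c (c (ε p ⊗ₜ[ℚ] ε q)) = ε p ⊗ₜ[ℚ] ε q
    rw [c_ee, map_add, map_sum, c_ee q p]
    simp only [Nat.add_comm q p]
    simp only [map_smul, map_add, key1]
    rw [add_assoc, cancel_sum]
  · -- ε ⊗ ψ
    show c (c (ε p ⊗ₜ[ℚ] ψ n)) = ε p ⊗ₜ[ℚ] ψ n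
    rw [c_ef, map_add, map_sum, c_fe n p]
    simp only [Nat.add_comm n p]
    simp only [map_smul, c_ff]
    simp only [show ∀ a : ℕ, p + n - a - 1 = p + n - 1 - a from fun a => by omega]
    rw [sum_rev, add_assoc, cancel_sum]
  · -- ψ ⊗ ε
    show c (c (ψ m ⊗ₜ[ℚ] ε q)) = ψ m ⊗ₜ[ℚ] ε q
    rw [c_fe, map_add, map_sum, c_ef q m]
    simp only [Nat.add_comm q m]
    simp only [map_smul, c_ff]
    simp only [show ∀ a : ℕ, m + q - a - 1 = m + q - 1 - a from fun a => by omega]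
    rw [sum_rev, add_assoc, cancel_sum]
  · -- ψ ⊗ ψ
    show c (c (ψ m ⊗ₜ[ℚ] ψ n)) = ψ m ⊗ₜ[ℚ] ψ n
    rw [c_ff, c_ff]

end
end

section
/- Let R be a (possibly noncommutative) ring and let (e_n)_{n≥0} and (f_n)_{n≥1} be sequences in R. In the formal power series ring R[[X,Y]] in two central variables, consider the product (∑_{i,j≥0} e_{i+j} X^i Y^j) · (∑_{k≥0} f_{k+1} Y^{k+1} − ∑_{k≥0} f_{k+1} X^{k+1}). Then for all integers 0 ≤ p < q, the coefficient of X^p Y^q in this product equals ∑_{a=p}^{q−1} e_a · f_{p+q−a}. -/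
/-!
Formal power series in two central variables `X, Y` over a (possibly
noncommutative) ring `R`, realized as `MvPowerSeries (Fin 2) R` with
`X` the variable of index `0` and `Y` the variable of index `1`.
A power series is given by its coefficient function `(Fin 2 →₀ ℕ) → R`.
-/

noncomputable section

/-- The series `∑_{i,j ≥ 0} e_{i+j} X^i Y^j`. -/
def seriesE {R : Type*} [Ring R] (e : ℕ → R) : MvPowerSeries (Fin 2) R :=
  fun d => e (d 0 + d 1)

/-- The series `∑_{k ≥ 0} f_{k+1} Y^{k+1} − ∑_{k ≥ 0} f_{k+1} X^{k+1}`. -/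
def seriesF {R : Type*} [Ring R] (f : ℕ → R) : MvPowerSeries (Fin 2) R :=
  fun d => (if d 0 = 0 ∧ 1 ≤ d 1 then f (d 1) else 0)
    - (if d 1 = 0 ∧ 1 ≤ d 0 then f (d 0) else 0)

lemma fin2_finsupp_eq (x : Fin 2 →₀ ℕ) :
    x = Finsupp.single 0 (x 0) + Finsupp.single 1 (x 1) := by
  ext a; fin_cases a <;> simp

/-- For `0 ≤ p < q`, the coefficient of `X^p Y^q` in
`(∑_{i,j≥0} e_{i+j} X^i Y^j) · (∑_{k≥0} f_{k+1} Y^{k+1} − ∑_{k≥0} f_{k+1} X^{k+1})`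
equals `∑_{a=p}^{q−1} e_a · f_{p+q−a}`. -/
theorem coeff_of_product {R : Type*} [Ring R] (e f : ℕ → R) (p q : ℕ) (hpq : p < q) :
    MvPowerSeries.coeff (R := R) (Finsupp.single (0 : Fin 2) p + Finsupp.single (1 : Fin 2) q)
        (seriesE e * seriesF f)
      = ∑ a ∈ Finset.Ico p q, e a * f (p + q - a) := by
  classical
  rw [MvPowerSeries.coeff_mul]
  have hd0 : (Finsupp.single (0 : Fin 2) p + Finsupp.single (1 : Fin 2) q) 0 = p := by simp
  have hd1 : (Finsupp.single (0 : Fin 2) p + Finsupp.single (1 : Fin 2) q) 1 = q := by simp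
  have key : (∑ x ∈ Finset.HasAntidiagonal.antidiagonal
        (Finsupp.single (0 : Fin 2) p + Finsupp.single (1 : Fin 2) q),
        MvPowerSeries.coeff (R := R) x.1 (seriesE e) * MvPowerSeries.coeff (R := R) x.2 (seriesF f))
      = ∑ ij ∈ (Finset.range (p+1)) ×ˢ (Finset.range (q+1)),
          e (ij.1 + ij.2) * ((if p - ij.1 = 0 ∧ 1 ≤ q - ij.2 then f (q - ij.2) else 0)
            - (if q - ij.2 = 0 ∧ 1 ≤ p - ij.1 then f (p - ij.1) else 0)) := by
    refine Finset.sum_nbij' (i := fun x => (x.1 0, x.1 1))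
      (j := fun y => (Finsupp.single 0 y.1 + Finsupp.single 1 y.2,
        Finsupp.single 0 (p - y.1) + Finsupp.single 1 (q - y.2))) ?_ ?_ ?_ ?_ ?_
    · intro x hx
      rw [Finset.HasAntidiagonal.mem_antidiagonal] at hx
      have h0 : x.1 0 + x.2 0 = p := by
        have := congrArg (fun z => z 0) hx; simpa using this
      have h1 : x.1 1 + x.2 1 = q := by
        have := congrArg (fun z => z 1) hx; simpa using this
      simp only [Finset.mem_product, Finset.mem_range]
      omega
    · intro y hy
      simp only [Finset.mem_product, Finset.mem_range] at hy
      rw [Finset.HasAntidiagonal.mem_antidiagonal]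
      ext a
      fin_cases a <;> simp <;> omega
    · intro x hx
      rw [Finset.HasAntidiagonal.mem_antidiagonal] at hx
      have h0 : x.1 0 + x.2 0 = p := by
        have := congrArg (fun z => z 0) hx; simpa using this
      have h1 : x.1 1 + x.2 1 = q := by
        have := congrArg (fun z => z 1) hx; simpa using this
      have e1 : Finsupp.single (0 : Fin 2) (x.1 0) + Finsupp.single 1 (x.1 1) = x.1 :=
        (fin2_finsupp_eq x.1).symm
      have e2 : Finsupp.single (0 : Fin 2) (p - x.1 0) + Finsupp.single 1 (q - x.1 1) = x.2 := by
        rw [fin2_finsupp_eq x.2]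
        congr 2 <;> omega
      simp only [e1, e2]
    · intro y hy
      simp
    · intro x hx
      rw [Finset.HasAntidiagonal.mem_antidiagonal] at hx
      have h0 : x.1 0 + x.2 0 = p := by
        have := congrArg (fun z => z 0) hx; simpa using this
      have h1 : x.1 1 + x.2 1 = q := by
        have := congrArg (fun z => z 1) hx; simpa using this
      have hx20 : x.2 0 = p - x.1 0 := by omega
      have hx21 : x.2 1 = q - x.1 1 := by omega
      simp only [MvPowerSeries.coeff_apply, seriesE, seriesF, hx20, hx21]
  rw [key, Finset.sum_product]
  have step : ∀ i ∈ Finset.range (p+1), ∀ j ∈ Finset.range (q+1), True := by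
    intro i _ j _; trivial
  -- split into two sums
  have split : (∑ i ∈ Finset.range (p+1), ∑ j ∈ Finset.range (q+1),
        e (i + j) * ((if p - i = 0 ∧ 1 ≤ q - j then f (q - j) else 0)
          - (if q - j = 0 ∧ 1 ≤ p - i then f (p - i) else 0)))
      = (∑ i ∈ Finset.range (p+1), ∑ j ∈ Finset.range (q+1),
          (if p - i = 0 ∧ 1 ≤ q - j then e (i + j) * f (q - j) else 0))
        - (∑ i ∈ Finset.range (p+1), ∑ j ∈ Finset.range (q+1),
          (if q - j = 0 ∧ 1 ≤ p - i then e (i + j) * f (p - i) else 0)) := by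
    rw [← Finset.sum_sub_distrib]
    refine Finset.sum_congr rfl fun i _ => ?_
    rw [← Finset.sum_sub_distrib]
    refine Finset.sum_congr rfl fun j _ => ?_
    rw [mul_sub]
    congr 1 <;> split <;> simp
  rw [split]
  have sum1 : (∑ i ∈ Finset.range (p+1), ∑ j ∈ Finset.range (q+1),
        (if p - i = 0 ∧ 1 ≤ q - j then e (i + j) * f (q - j) else 0))
      = ∑ j ∈ Finset.range q, e (p + j) * f (q - j) := by
    rw [Finset.sum_eq_single_of_mem p (by simp)]
    · rw [Finset.sum_range_succ]
      simp only [Nat.sub_self, le_refl, and_true, true_and]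
      rw [if_neg (by omega)]
      rw [add_zero]
      refine Finset.sum_congr rfl fun j hj => ?_
      rw [Finset.mem_range] at hj
      rw [if_pos (by omega)]
    · intro i hi hne
      rw [Finset.mem_range] at hi
      apply Finset.sum_eq_zero
      intro j _
      rw [if_neg (by omega)]
  have sum2 : (∑ i ∈ Finset.range (p+1), ∑ j ∈ Finset.range (q+1),
        (if q - j = 0 ∧ 1 ≤ p - i then e (i + j) * f (p - i) else 0))
      = ∑ i ∈ Finset.range p, e (i + q) * f (p - i) := by
    rw [Finset.sum_comm]
    rw [Finset.sum_eq_single_of_mem q (by simp)]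
    · rw [Finset.sum_range_succ]
      simp only [Nat.sub_self, le_refl, and_true, true_and]
      rw [if_neg (by omega)]
      rw [add_zero]
      refine Finset.sum_congr rfl fun i hi => ?_
      rw [Finset.mem_range] at hi
      rw [if_pos (by omega)]
    · intro j hj hne
      rw [Finset.mem_range] at hj
      apply Finset.sum_eq_zero
      intro i _
      rw [if_neg (by omega)]
  rw [sum1, sum2]
  -- Now: ∑_{j<q} e(p+j) f(q-j) - ∑_{i<p} e(i+q) f(p-i) = ∑_{a∈Ico p q} e a f(p+q-a)
  have target : (∑ a ∈ Finset.Ico p q, e a * f (p + q - a))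
      = ∑ j ∈ Finset.range (q - p), e (p + j) * f (q - j) := by
    rw [Finset.sum_Ico_eq_sum_range]
    refine Finset.sum_congr rfl fun j hj => ?_
    rw [Finset.mem_range] at hj
    have h : p + q - (p + j) = q - j := by omega
    rw [h]
  have sum2' : (∑ i ∈ Finset.range p, e (i + q) * f (p - i))
      = ∑ j ∈ Finset.Ico (q - p) q, e (p + j) * f (q - j) := by
    rw [Finset.sum_Ico_eq_sum_range]
    have hqp : q - (q - p) = p := by omega
    rw [hqp]
    refine Finset.sum_congr rfl fun i hi => ?_
    rw [Finset.mem_range] at hi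
    have h1 : p + (q - p + i) = i + q := by omega
    have h2 : q - (q - p + i) = p - i := by omega
    rw [h1, h2]
  have total : (∑ j ∈ Finset.range q, e (p + j) * f (q - j))
      = (∑ j ∈ Finset.range (q - p), e (p + j) * f (q - j))
        + ∑ j ∈ Finset.Ico (q - p) q, e (p + j) * f (q - j) := by
    rw [Finset.range_eq_Ico, Finset.range_eq_Ico]
    exact (Finset.sum_Ico_consecutive (fun j => e (p + j) * f (q - j)) (m := 0) (n := q - p) (k := q) (by omega) (by omega)).symm
  rw [target, total, sum2']
  abel
end
end

section
/- In K one has E_X * E_Y − E_Y * E_X = 2·(y_1+y_2−x_1−x_2)·(Y−X) / ((1−x_1X)(1−x_2X)(1−x_1Y)(1−x_2Y)), where E_X(x,y) = 1/(1−xX) and E_Y(x,y) = 1/(1−xY). -/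
/-!
`K` is the field of rational functions over ℚ in the six variables
`x₁, x₂, y₁, y₂, X, Y`, realized as the fraction field of
`MvPolynomial (Fin 6) ℚ`.  `starMul` is the Kontsevich–Soibelman shuffle
product of the Cohomological Hall algebra of the Kronecker quiver in
bidegree `(1,1) × (1,1)`, and `starMul'` the one in bidegree `(1,0) × (1,2)`
(evaluated on classes not depending on the `y`-variables of the second factor).
-/

open MvPolynomial

noncomputable section

abbrev P6 : Type := MvPolynomial (Fin 6) ℚ
abbrev K : Type := FractionRing P6

def x1 : K := algebraMap P6 K (X 0)
def x2 : K := algebraMap P6 K (X 1)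
def y1 : K := algebraMap P6 K (X 2)
def y2 : K := algebraMap P6 K (X 3)
def Xv : K := algebraMap P6 K (X 4)
def Yv : K := algebraMap P6 K (X 5)

/-- The shuffle product in bidegree `(1,1) × (1,1)`:
`f*g = (1/((x₂−x₁)(y₂−y₁))) · ( f(x₁,y₁)g(x₂,y₂)(y₂−x₁)² − f(x₁,y₂)g(x₂,y₁)(y₁−x₁)²`
`− f(x₂,y₁)g(x₁,y₂)(y₂−x₂)² + f(x₂,y₂)g(x₁,y₁)(y₁−x₂)² )`. -/
def starMul (f g : K → K → K) : K :=
  ((x2 - x1) * (y2 - y1))⁻¹ *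
    (f x1 y1 * g x2 y2 * (y2 - x1) ^ 2 - f x1 y2 * g x2 y1 * (y1 - x1) ^ 2 -
      f x2 y1 * g x1 y2 * (y2 - x2) ^ 2 + f x2 y2 * g x1 y1 * (y1 - x2) ^ 2)

/-- The shuffle product in bidegree `(1,0) × (1,2)`:
`f∗'g = (1/(x₂−x₁)) · ( f(x₁)g(x₂)(y₁−x₁)²(y₂−x₁)² − f(x₂)g(x₁)(y₁−x₂)²(y₂−x₂)² )`. -/
def starMul' (f g : K → K) : K :=
  (x2 - x1)⁻¹ *
    (f x1 * g x2 * (y1 - x1) ^ 2 * (y2 - x1) ^ 2 -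
      f x2 * g x1 * (y1 - x2) ^ 2 * (y2 - x2) ^ 2)

/-- `E(X)(x,y) = 1/(1−xX)`. -/
def EX : K → K → K := fun x _ => (1 - x * Xv)⁻¹
/-- `E(Y)(x,y) = 1/(1−xY)`. -/
def EY : K → K → K := fun x _ => (1 - x * Yv)⁻¹
/-- `F(X)(x,y) = (y−x)/(1−xX)`. -/
def FX : K → K → K := fun x y => (y - x) / (1 - x * Xv)
/-- `F(Y)(x,y) = (y−x)/(1−xY)`. -/
def FY : K → K → K := fun x y => (y - x) / (1 - x * Yv)
/-- `G(x,y) = (YE(Y)−XE(X))/(Y−X) = 1/((1−xX)(1−xY))`. -/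
def G : K → K → K := fun x _ => ((1 - x * Xv) * (1 - x * Yv))⁻¹
/-- `H(x,y) = (YF(Y)−XF(X))/(Y−X) = (y−x)/((1−xX)(1−xY))`. -/
def H : K → K → K := fun x y => (y - x) / ((1 - x * Xv) * (1 - x * Yv))
/-- `g₀(x) = 1/((1−xX)(1−xY))`. -/
def g0 : K → K := fun x => ((1 - x * Xv) * (1 - x * Yv))⁻¹


lemma mapne (p : P6) (a : Fin 6 → ℚ) (h : eval a p ≠ 0) :
    algebraMap P6 K p ≠ 0 := by
  have hp : p ≠ 0 := fun h0 => h (by simp [h0])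
  exact (map_ne_zero_iff _ (IsFractionRing.injective P6 K)).2 hp

set_option maxHeartbeats 4000000 in
/-- `[E(X),E(Y)]_* = 2(y₁+y₂−x₁−x₂)(Y−X)/((1−x₁X)(1−x₂X)(1−x₁Y)(1−x₂Y))`. -/
theorem stmt8 : starMul EX EY - starMul EY EX
    = 2 * (y1 + y2 - x1 - x2) * (Yv - Xv) /
        ((1 - x1 * Xv) * (1 - x2 * Xv) * (1 - x1 * Yv) * (1 - x2 * Yv)) := by
  have h1 : x2 - x1 ≠ 0 := by
    rw [x2, x1, ← map_sub]
    exact mapne _ ![0,1,0,0,0,0] (by simp)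
  have h2 : y2 - y1 ≠ 0 := by
    rw [y2, y1, ← map_sub]
    exact mapne _ ![0,0,0,1,0,0] (by simp)
  have hA : (1 : K) - x1 * Xv ≠ 0 := by
    rw [x1, Xv, ← map_mul, ← map_one (algebraMap P6 K), ← map_sub]
    exact mapne _ 0 (by simp)
  have hB : (1 : K) - x2 * Xv ≠ 0 := by
    rw [x2, Xv, ← map_mul, ← map_one (algebraMap P6 K), ← map_sub]
    exact mapne _ 0 (by simp)
  have hC : (1 : K) - x1 * Yv ≠ 0 := by
    rw [x1, Yv, ← map_mul, ← map_one (algebraMap P6 K), ← map_sub]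
    exact mapne _ 0 (by simp)
  have hD : (1 : K) - x2 * Yv ≠ 0 := by
    rw [x2, Yv, ← map_mul, ← map_one (algebraMap P6 K), ← map_sub]
    exact mapne _ 0 (by simp)
  have e1 : starMul EX EY = (x2 - x1)⁻¹ *
      ((1 - x1 * Xv)⁻¹ * (1 - x2 * Yv)⁻¹ * (y1 + y2 - 2 * x1) -
        (1 - x2 * Xv)⁻¹ * (1 - x1 * Yv)⁻¹ * (y1 + y2 - 2 * x2)) := by
    simp only [starMul, EX, EY]
    have hN : (1 - x1 * Xv)⁻¹ * (1 - x2 * Yv)⁻¹ * (y2 - x1) ^ 2 -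
        (1 - x1 * Xv)⁻¹ * (1 - x2 * Yv)⁻¹ * (y1 - x1) ^ 2 -
        (1 - x2 * Xv)⁻¹ * (1 - x1 * Yv)⁻¹ * (y2 - x2) ^ 2 +
        (1 - x2 * Xv)⁻¹ * (1 - x1 * Yv)⁻¹ * (y1 - x2) ^ 2
        = (y2 - y1) * ((1 - x1 * Xv)⁻¹ * (1 - x2 * Yv)⁻¹ * (y1 + y2 - 2 * x1) -
            (1 - x2 * Xv)⁻¹ * (1 - x1 * Yv)⁻¹ * (y1 + y2 - 2 * x2)) := by ring
    rw [hN, mul_inv]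
    linear_combination ((x2 - x1)⁻¹ * ((1 - x1 * Xv)⁻¹ * (1 - x2 * Yv)⁻¹ * (y1 + y2 - 2 * x1) -
      (1 - x2 * Xv)⁻¹ * (1 - x1 * Yv)⁻¹ * (y1 + y2 - 2 * x2))) * inv_mul_cancel₀ h2
  have e2 : starMul EY EX = (x2 - x1)⁻¹ *
      ((1 - x1 * Yv)⁻¹ * (1 - x2 * Xv)⁻¹ * (y1 + y2 - 2 * x1) -
        (1 - x2 * Yv)⁻¹ * (1 - x1 * Xv)⁻¹ * (y1 + y2 - 2 * x2)) := by
    simp only [starMul, EX, EY]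
    have hN : (1 - x1 * Yv)⁻¹ * (1 - x2 * Xv)⁻¹ * (y2 - x1) ^ 2 -
        (1 - x1 * Yv)⁻¹ * (1 - x2 * Xv)⁻¹ * (y1 - x1) ^ 2 -
        (1 - x2 * Yv)⁻¹ * (1 - x1 * Xv)⁻¹ * (y2 - x2) ^ 2 +
        (1 - x2 * Yv)⁻¹ * (1 - x1 * Xv)⁻¹ * (y1 - x2) ^ 2
        = (y2 - y1) * ((1 - x1 * Yv)⁻¹ * (1 - x2 * Xv)⁻¹ * (y1 + y2 - 2 * x1) -
            (1 - x2 * Yv)⁻¹ * (1 - x1 * Xv)⁻¹ * (y1 + y2 - 2 * x2)) := by ring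
    rw [hN, mul_inv]
    linear_combination ((x2 - x1)⁻¹ * ((1 - x1 * Yv)⁻¹ * (1 - x2 * Xv)⁻¹ * (y1 + y2 - 2 * x1) -
      (1 - x2 * Yv)⁻¹ * (1 - x1 * Xv)⁻¹ * (y1 + y2 - 2 * x2))) * inv_mul_cancel₀ h2
  rw [e1, e2, ← mul_sub]
  have hM : (1 - x1 * Xv)⁻¹ * (1 - x2 * Yv)⁻¹ * (y1 + y2 - 2 * x1) -
        (1 - x2 * Xv)⁻¹ * (1 - x1 * Yv)⁻¹ * (y1 + y2 - 2 * x2) -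
      ((1 - x1 * Yv)⁻¹ * (1 - x2 * Xv)⁻¹ * (y1 + y2 - 2 * x1) -
        (1 - x2 * Yv)⁻¹ * (1 - x1 * Xv)⁻¹ * (y1 + y2 - 2 * x2))
      = ((1 - x1 * Xv)⁻¹ * (1 - x2 * Yv)⁻¹ - (1 - x2 * Xv)⁻¹ * (1 - x1 * Yv)⁻¹) *
          (2 * (y1 + y2 - x1 - x2)) := by ring
  rw [hM]
  have hd : (1 - x1 * Xv)⁻¹ * (1 - x2 * Yv)⁻¹ - (1 - x2 * Xv)⁻¹ * (1 - x1 * Yv)⁻¹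
      = (x2 - x1) * (Yv - Xv) *
        ((1 - x1 * Xv) * (1 - x2 * Xv) * (1 - x1 * Yv) * (1 - x2 * Yv))⁻¹ := by
    rw [eq_mul_inv_iff_mul_eq₀ (mul_ne_zero (mul_ne_zero (mul_ne_zero hA hB) hC) hD)]
    linear_combination (1 - x2 * Xv) * (1 - x1 * Yv) * ((1 - x2 * Yv)⁻¹ * (1 - x2 * Yv)) *
        inv_mul_cancel₀ hA + (1 - x2 * Xv) * (1 - x1 * Yv) * inv_mul_cancel₀ hD -
      (1 - x1 * Xv) * (1 - x2 * Yv) * ((1 - x1 * Yv)⁻¹ * (1 - x1 * Yv)) * inv_mul_cancel₀ hB -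
      (1 - x1 * Xv) * (1 - x2 * Yv) * inv_mul_cancel₀ hC
  rw [hd]
  linear_combination ((Yv - Xv) *
      ((1 - x1 * Xv) * (1 - x2 * Xv) * (1 - x1 * Yv) * (1 - x2 * Yv))⁻¹ *
      (2 * (y1 + y2 - x1 - x2))) * inv_mul_cancel₀ h1

end
end

section
/- In K one has E_X * F_Y − F_Y * E_X = (y_1+y_2−x_1−x_2)^2·(Y−X) / ((1−x_1X)(1−x_2X)(1−x_1Y)(1−x_2Y)), where E_X(x,y) = 1/(1−xX) and F_Y(x,y) = (y−x)/(1−xY). -/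
/-!
`K` is the field of rational functions over ℚ in the six variables
`x₁, x₂, y₁, y₂, X, Y`, realized as the fraction field of
`MvPolynomial (Fin 6) ℚ`.  `starMul` is the Kontsevich–Soibelman shuffle
product of the Cohomological Hall algebra of the Kronecker quiver in
bidegree `(1,1) × (1,1)`, and `starMul'` the one in bidegree `(1,0) × (1,2)`
(evaluated on classes not depending on the `y`-variables of the second factor).
-/

open MvPolynomial

noncomputable section

lemma nz_of_eval (p : P6) (v : Fin 6 → ℚ) (h : eval v p ≠ 0) :
    algebraMap P6 K p ≠ 0 := by
  intro h0
  apply h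
  have hp : p = 0 := IsFractionRing.injective P6 K (by simpa using h0)
  simp [hp]

/-- `[E(X),F(Y)]_* = (y₁+y₂−x₁−x₂)²(Y−X)/((1−x₁X)(1−x₂X)(1−x₁Y)(1−x₂Y))`. -/
theorem stmt11 : starMul EX FY - starMul FY EX
    = (y1 + y2 - x1 - x2) ^ 2 * (Yv - Xv) /
        ((1 - x1 * Xv) * (1 - x2 * Xv) * (1 - x1 * Yv) * (1 - x2 * Yv)) := by
  have hx : x2 - x1 ≠ 0 := by
    have := nz_of_eval (X 1 - X 0) ![0,1,0,0,0,0] (by simp)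
    rwa [map_sub] at this
  have hy : y2 - y1 ≠ 0 := by
    have := nz_of_eval (X 3 - X 2) ![0,0,0,1,0,0] (by simp)
    rwa [map_sub] at this
  have h1X : (1 : K) - x1 * Xv ≠ 0 := by
    have := nz_of_eval (1 - X 0 * X 4) (fun _ => 0) (by simp)
    rwa [map_sub, map_one, map_mul] at this
  have h2X : (1 : K) - x2 * Xv ≠ 0 := by
    have := nz_of_eval (1 - X 1 * X 4) (fun _ => 0) (by simp)
    rwa [map_sub, map_one, map_mul] at this
  have h1Y : (1 : K) - x1 * Yv ≠ 0 := by
    have := nz_of_eval (1 - X 0 * X 5) (fun _ => 0) (by simp)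
    rwa [map_sub, map_one, map_mul] at this
  have h2Y : (1 : K) - x2 * Yv ≠ 0 := by
    have := nz_of_eval (1 - X 1 * X 5) (fun _ => 0) (by simp)
    rwa [map_sub, map_one, map_mul] at this
  have rx : (x2 - x1) * (x2 - x1)⁻¹ = 1 := mul_inv_cancel₀ hx
  have ry : (y2 - y1) * (y2 - y1)⁻¹ = 1 := mul_inv_cancel₀ hy
  have r1 : (1 - x1 * Xv) * (1 - x1 * Xv)⁻¹ = 1 := mul_inv_cancel₀ h1X
  have r2 : (1 - x2 * Xv) * (1 - x2 * Xv)⁻¹ = 1 := mul_inv_cancel₀ h2X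
  have r3 : (1 - x1 * Yv) * (1 - x1 * Yv)⁻¹ = 1 := mul_inv_cancel₀ h1Y
  have r4 : (1 - x2 * Yv) * (1 - x2 * Yv)⁻¹ = 1 := mul_inv_cancel₀ h2Y
  simp only [starMul, EX, FY, div_eq_mul_inv, mul_inv]
  linear_combination
    ((y1 + y2 - x1 - x2) ^ 2 * (Yv - Xv) * (1 - x1 * Xv)⁻¹ * (1 - x2 * Xv)⁻¹ *
        (1 - x1 * Yv)⁻¹ * (1 - x2 * Yv)⁻¹) * ((y2 - y1) * (y2 - y1)⁻¹) * rx +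
    ((y1 + y2 - x1 - x2) ^ 2 * (Yv - Xv) * (1 - x1 * Xv)⁻¹ * (1 - x2 * Xv)⁻¹ *
        (1 - x1 * Yv)⁻¹ * (1 - x2 * Yv)⁻¹) * ry +
    ((x2 - x1)⁻¹ * (y2 - y1)⁻¹ * (y2 - y1) * (y1 + y2 - x1 - x2) ^ 2) *
      (((1 - x2 * Xv)⁻¹ * (1 - x1 * Yv)⁻¹ * (1 - x2 * Yv)⁻¹ * (1 - x2 * Yv)) * r1 -
       ((1 - x1 * Xv)⁻¹ * (1 - x1 * Yv)⁻¹ * (1 - x2 * Yv)⁻¹ * (1 - x1 * Yv)) * r2 -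
       ((1 - x1 * Xv)⁻¹ * (1 - x2 * Yv)⁻¹) * r3 +
       ((1 - x2 * Xv)⁻¹ * (1 - x1 * Yv)⁻¹) * r4)

end
end

section
/- In K one has H * H = (y_1+y_2−x_1−x_2)^2 / ((1−x_1X)(1−x_2X)(1−x_1Y)(1−x_2Y)), where H(x,y) = (y−x)/((1−xX)(1−xY)). -/
/-!
`K` is the field of rational functions over ℚ in the six variables
`x₁, x₂, y₁, y₂, X, Y`, realized as the fraction field of
`MvPolynomial (Fin 6) ℚ`.  `starMul` is the Kontsevich–Soibelman shuffle
product of the Cohomological Hall algebra of the Kronecker quiver in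
bidegree `(1,1) × (1,1)`, and `starMul'` the one in bidegree `(1,0) × (1,2)`
(evaluated on classes not depending on the `y`-variables of the second factor).
-/

open MvPolynomial

noncomputable section

lemma alg_ne {p : P6} (σ : Fin 6 → ℚ) (h : eval σ p ≠ 0) :
    algebraMap P6 K p ≠ 0 := by
  intro h0
  exact h (by rw [(map_eq_zero_iff _ (IsFractionRing.injective P6 K)).mp h0]; simp)

lemma hx21 : x2 - x1 ≠ 0 := by
  have : x2 - x1 = algebraMap P6 K (X 1 - X 0) := by simp [x1, x2]
  rw [this]
  exact alg_ne (fun i => if i = 1 then 1 else 0) (by simp)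

lemma hy21 : y2 - y1 ≠ 0 := by
  have : y2 - y1 = algebraMap P6 K (X 3 - X 2) := by simp [y1, y2]
  rw [this]
  exact alg_ne (fun i => if i = 3 then 1 else 0) (by simp)

lemma h1X : (1 : K) - x1 * Xv ≠ 0 := by
  have : (1:K) - x1 * Xv = algebraMap P6 K (1 - X 0 * X 4) := by simp [x1, Xv]
  rw [this]; exact alg_ne 0 (by simp)

lemma h2X : (1 : K) - x2 * Xv ≠ 0 := by
  have : (1:K) - x2 * Xv = algebraMap P6 K (1 - X 1 * X 4) := by simp [x2, Xv]
  rw [this]; exact alg_ne 0 (by simp)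

lemma h1Y : (1 : K) - x1 * Yv ≠ 0 := by
  have : (1:K) - x1 * Yv = algebraMap P6 K (1 - X 0 * X 5) := by simp [x1, Yv]
  rw [this]; exact alg_ne 0 (by simp)

lemma h2Y : (1 : K) - x2 * Yv ≠ 0 := by
  have : (1:K) - x2 * Yv = algebraMap P6 K (1 - X 1 * X 5) := by simp [x2, Yv]
  rw [this]; exact alg_ne 0 (by simp)

set_option maxHeartbeats 2000000 in
/-- `H * H = (y₁+y₂−x₁−x₂)²/((1−x₁X)(1−x₂X)(1−x₁Y)(1−x₂Y))`. -/
theorem stmt12 : starMul H H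
    = (y1 + y2 - x1 - x2) ^ 2 /
        ((1 - x1 * Xv) * (1 - x2 * Xv) * (1 - x1 * Yv) * (1 - x2 * Yv)) := by
  have hA : (x2 - x1) * (y2 - y1) ≠ 0 := mul_ne_zero hx21 hy21
  have hD : (1 - x1 * Xv) * (1 - x2 * Xv) * (1 - x1 * Yv) * (1 - x2 * Yv) ≠ 0 :=
    mul_ne_zero (mul_ne_zero (mul_ne_zero h1X h2X) h1Y) h2Y
  rw [starMul, inv_mul_eq_div, div_eq_div_iff hA hD]
  have t1 : H x1 y1 * H x2 y2 * ((1 - x1 * Xv) * (1 - x2 * Xv) * (1 - x1 * Yv) * (1 - x2 * Yv))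
      = (y1 - x1) * (y2 - x2) := by
    simp only [H]; field_simp [h1X, h2X, h1Y, h2Y]
    rw [div_eq_iff (mul_ne_zero (by rw [mul_comm]; exact h2X) (by rw [mul_comm]; exact h2Y))]; ring
  have t2 : H x1 y2 * H x2 y1 * ((1 - x1 * Xv) * (1 - x2 * Xv) * (1 - x1 * Yv) * (1 - x2 * Yv))
      = (y2 - x1) * (y1 - x2) := by
    simp only [H]; field_simp [h1X, h2X, h1Y, h2Y]
    rw [div_eq_iff (mul_ne_zero (by rw [mul_comm]; exact h2X) (by rw [mul_comm]; exact h2Y))]; ring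
  have t3 : H x2 y1 * H x1 y2 * ((1 - x1 * Xv) * (1 - x2 * Xv) * (1 - x1 * Yv) * (1 - x2 * Yv))
      = (y1 - x2) * (y2 - x1) := by
    simp only [H]; field_simp [h1X, h2X, h1Y, h2Y]
    rw [div_eq_iff (mul_ne_zero (by rw [mul_comm]; exact h1X) (by rw [mul_comm]; exact h1Y))]; ring
  have t4 : H x2 y2 * H x1 y1 * ((1 - x1 * Xv) * (1 - x2 * Xv) * (1 - x1 * Yv) * (1 - x2 * Yv))
      = (y2 - x2) * (y1 - x1) := by
    simp only [H]; field_simp [h1X, h2X, h1Y, h2Y]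
    rw [div_eq_iff (mul_ne_zero (by rw [mul_comm]; exact h1X) (by rw [mul_comm]; exact h1Y))]; ring
  linear_combination (y2 - x1) ^ 2 * t1 - (y1 - x1) ^ 2 * t2 - (y2 - x2) ^ 2 * t3
    + (y1 - x2) ^ 2 * t4

end
end

section
/- Let d', d'' ≥ 1 and d = d' + d''. For any polynomials f ∈ ℚ[t_1,…,t_{d'}] and g ∈ ℚ[t_1,…,t_{d''}], define in the fraction field of ℚ[x_1,…,x_d] the element S_{d',d''}(f,g) := ∑_{σ ∈ S_d} f(x_{σ(1)},…,x_{σ(d')})·g(x_{σ(d'+1)},…,x_{σ(d)})·∏_{r=1}^{d'} ∏_{s=1}^{d''} (x_{σ(d'+s)} − x_{σ(r)})^{−1}. Then S_{d',d''}(f,g) = (−1)^{d'·d''} · S_{d'',d'}(g,f). -/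
/-!
For `d = d' + d''`, `Ssum d d' d'' h f g` is the element
`∑_{σ ∈ S_d} f(x_{σ(1)},…,x_{σ(d')}) g(x_{σ(d'+1)},…,x_{σ(d)})
  ∏_{r=1}^{d'} ∏_{s=1}^{d''} (x_{σ(d'+s)} − x_{σ(r)})⁻¹`
of the fraction field of `ℚ[x_1,…,x_d]`, which (up to the factor `d'!·d''!`)
is the Kontsevich–Soibelman shuffle product of `H(A_1)`.
-/

open MvPolynomial

noncomputable section

/-- The field of rational functions `ℚ(x_1,…,x_d)`. -/
abbrev KK (d : ℕ) : Type := FractionRing (MvPolynomial (Fin d) ℚ)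

/-- The variable `x_i` viewed in `ℚ(x_1,…,x_d)`. -/
def xv (d : ℕ) (i : Fin d) : KK d :=
  algebraMap (MvPolynomial (Fin d) ℚ) (KK d) (X i)

/-- `Ssum d a b h f g = ∑_{σ ∈ S_d} f(x_{σ(1)},…,x_{σ(a)})·g(x_{σ(a+1)},…,x_{σ(a+b)})·
∏_{r=1}^{a} ∏_{s=1}^{b} (x_{σ(a+s)} − x_{σ(r)})⁻¹` in `ℚ(x_1,…,x_d)`,
where `h : a + b = d`. -/
def Ssum (d a b : ℕ) (h : a + b = d) (f : MvPolynomial (Fin a) ℚ)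
    (g : MvPolynomial (Fin b) ℚ) : KK d :=
  ∑ σ : Equiv.Perm (Fin d),
    aeval (fun r : Fin a => xv d (σ (Fin.cast h (Fin.castAdd b r)))) f *
    aeval (fun s : Fin b => xv d (σ (Fin.cast h (Fin.natAdd a s)))) g *
    ∏ r : Fin a, ∏ s : Fin b,
      (xv d (σ (Fin.cast h (Fin.natAdd a s))) - xv d (σ (Fin.cast h (Fin.castAdd b r))))⁻¹

/-- Anti-commutativity of the shuffle product of `H(A_1)`:
`S_{d',d''}(f,g) = (−1)^{d'·d''} · S_{d'',d'}(g,f)`. -/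
theorem Ssum_anticomm (d a b : ℕ) (ha : 1 ≤ a) (hb : 1 ≤ b) (h : a + b = d)
    (f : MvPolynomial (Fin a) ℚ) (g : MvPolynomial (Fin b) ℚ) :
    Ssum d a b h f g = (-1 : KK d) ^ (a * b) * Ssum d b a (by omega) g f := by
  have h' : b + a = d := by omega
  set e : Equiv.Perm (Fin d) :=
    ((finCongr h').symm.trans (finSumFinEquiv.symm.trans
      ((Equiv.sumComm (Fin b) (Fin a)).trans (finSumFinEquiv.trans (finCongr h))))) with he
  have hc : ∀ (τ : Equiv.Perm (Fin d)) (r : Fin b),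
      (τ * e) (Fin.cast h' (Fin.castAdd a r)) = τ (Fin.cast h (Fin.natAdd a r)) := by
    intro τ r
    simp [he, Equiv.Perm.mul_apply, finCongr, Fin.cast_cast]
  have hn : ∀ (τ : Equiv.Perm (Fin d)) (s : Fin a),
      (τ * e) (Fin.cast h' (Fin.natAdd b s)) = τ (Fin.cast h (Fin.castAdd b s)) := by
    intro τ s
    simp [he, Equiv.Perm.mul_apply, finCongr, Fin.cast_cast]
  rw [Ssum, Ssum, Finset.mul_sum]
  refine Fintype.sum_equiv (Equiv.mulRight e) _ _ ?_
  intro τ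
  simp only [Equiv.coe_mulRight, hc, hn]
  rw [Finset.prod_comm]
  have hprod : ∏ s : Fin b, ∏ r : Fin a,
      (xv d (τ (Fin.cast h (Fin.natAdd a s))) - xv d (τ (Fin.cast h (Fin.castAdd b r))))⁻¹
      = (-1 : KK d) ^ (a * b) * ∏ s : Fin b, ∏ r : Fin a,
      (xv d (τ (Fin.cast h (Fin.castAdd b r))) - xv d (τ (Fin.cast h (Fin.natAdd a s))))⁻¹ := by
    have key : ∀ (s : Fin b) (r : Fin a),
        (xv d (τ (Fin.cast h (Fin.natAdd a s))) - xv d (τ (Fin.cast h (Fin.castAdd b r))))⁻¹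
        = (-1 : KK d) * (xv d (τ (Fin.cast h (Fin.castAdd b r))) - xv d (τ (Fin.cast h (Fin.natAdd a s))))⁻¹ := by
      intro s r
      rw [← neg_sub, inv_neg]; ring
    simp only [key, Finset.prod_mul_distrib, Finset.prod_const, Finset.card_univ,
      Fintype.card_fin]
    rw [← pow_mul]
  rw [hprod]
  ring

end
end
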